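/- arXiv:2209.08638 — 6 statements merged into one kernel-verified Lean document; each statement's English description precedes it below -/
import Mathlib

section
/- Let F1, ..., Ft be finite graphs and let S({F1,...,Ft}) denote the smallest family of graphs containing F1,...,Ft (up to isomorphism) that is closed under substitutions. If F ∈ S({F1,...,Ft}) and P is a prime induced subgraph of F, then P is an induced subgraph of some Fi. -/
def Subst {V1 V2 : Type} (G1 : SimpleGraph V1) (G2 : SimpleGraph V2) (v : V1) :
    SimpleGraph ({u : V1 // u ≠ v} ⊕ V2) where
  Adj x y :=
    match x, y with
    | Sum.inl u, Sum.inl u' => G1.Adj u.1 u'.1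
    | Sum.inl u, Sum.inr _ => G1.Adj u.1 v
    | Sum.inr _, Sum.inl u => G1.Adj u.1 v
    | Sum.inr w, Sum.inr w' => G2.Adj w w'
  symm := by
    constructor
    rintro (u | w) (u' | w') h
    · exact G1.adj_symm h
    · exact h
    · exact h
    · exact G2.adj_symm h
  loopless := by
    constructor
    rintro (u | w) h
    · exact G1.irrefl h
    · exact G2.irrefl h

structure FinGraph : Type 1 where
  V : Type
  finV : Finite V
  G : SimpleGraph V

attribute [instance] FinGraph.finV

def FinGraph.subst (A B : FinGraph) (v : A.V) : FinGraph :=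
  ⟨{u : A.V // u ≠ v} ⊕ B.V, inferInstance, Subst A.G B.G v⟩

def FinGraph.induce (A : FinGraph) (s : Set A.V) : FinGraph :=
  ⟨↥s, inferInstance, SimpleGraph.induce s A.G⟩

def ClosedIso (F : FinGraph → Prop) : Prop :=
  ∀ A B : FinGraph, F A → Nonempty (A.G ≃g B.G) → F B

def ClosedSubst (F : FinGraph → Prop) : Prop :=
  ∀ (A B : FinGraph) (v : A.V), F A → F B → F (A.subst B v)

def ClosedInduced (F : FinGraph → Prop) : Prop :=
  ∀ (A : FinGraph) (s : Set A.V), F A → F (A.induce s)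

def IsPrime (A : FinGraph) : Prop :=
  ¬ ∃ (B C : FinGraph) (v : B.V),
      Nat.card B.V < Nat.card A.V ∧ Nat.card C.V < Nat.card A.V ∧
      Nonempty (A.G ≃g (B.subst C v).G)

def SClosure (P : FinGraph → Prop) (A : FinGraph) : Prop :=
  ∀ F : FinGraph → Prop, ClosedSubst F → ClosedIso F → (∀ B, P B → F B) → F A

lemma key (A B : FinGraph) (v : A.V) (P : FinGraph) (hP : IsPrime P)
    (f : P.G ↪g (A.subst B v).G) :
    Nonempty (P.G ↪g A.G) ∨ Nonempty (P.G ↪g B.G) := by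
  classical
  set S2 : Set P.V := {p | (f p).isRight} with hS2
  have hleft : ∀ p : P.V, p ∉ S2 → ∃ u : {u : A.V // u ≠ v}, f p = Sum.inl u := by
    intro p hp
    rcases hx : f p with u | w
    · exact ⟨u, rfl⟩
    · exact absurd (by simp [hS2, hx]) hp
  by_cases h2 : ∃ p : P.V, p ∈ S2
  · obtain ⟨p₀, hp₀⟩ := h2
    obtain ⟨w₀, hw₀⟩ : ∃ w, f p₀ = Sum.inr w := Sum.isRight_iff.mp hp₀
    by_cases h1 : ∃ p : P.V, p ∉ S2
    · -- mixed case
      by_cases hone : ∀ p : P.V, p ∈ S2 → p = p₀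
      · -- only p₀ is on the right; embed into A, sending p₀ to v
        left
        choose g hg using hleft
        refine ⟨⟨⟨fun p => if h : p ∈ S2 then v else (g p h).1, ?_⟩, ?_⟩⟩
        · intro p q hpq
          dsimp at hpq
          split_ifs at hpq with hp hq hq
          · exact (hone p hp).trans (hone q hq).symm
          · exact absurd hpq.symm (g q hq).2
          · exact absurd hpq (g p hp).2
          · apply f.injective
            rw [hg p hp, hg q hq]
            exact congrArg _ (Subtype.ext hpq)
        · intro p q
          show A.G.Adj (if h : p ∈ S2 then v else (g p h).1) (if h : q ∈ S2 then v else (g q h).1) ↔ P.G.Adj p q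
          split_ifs with hp hq hq
          · have hp' := hone p hp; have hq' := hone q hq
            subst hp'; rw [hq']
            simp [SimpleGraph.irrefl]
          · have hfp : f p = Sum.inr w₀ := by rw [hone p hp]; exact hw₀
            rw [← f.map_rel_iff, hg q hq, hfp]
            exact Iff.trans (by exact A.G.adj_comm v _) (Iff.of_eq rfl)
          · have hfq : f q = Sum.inr w₀ := by rw [hone q hq]; exact hw₀
            rw [← f.map_rel_iff, hg p hp, hfq]
            exact Iff.of_eq rfl
          · rw [← f.map_rel_iff, hg p hp, hg q hq]
            exact Iff.of_eq rfl
      · -- at least two vertices on the right: contradicts primality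
        exfalso
        push_neg at hone
        obtain ⟨p₁, hp₁, hp₁0⟩ := hone
        obtain ⟨q, hq⟩ := h1
        -- module property
        have hmod : ∀ p r : P.V, p ∉ S2 → r ∈ S2 → (P.G.Adj p r ↔ P.G.Adj p p₀) := by
          intro p r hp hr
          obtain ⟨u, hu⟩ := hleft p hp
          obtain ⟨w, hw⟩ : ∃ w, f r = Sum.inr w := Sum.isRight_iff.mp hr
          rw [← f.map_rel_iff, ← f.map_rel_iff, hu, hw, hw₀]
          exact Iff.of_eq rfl
        apply hP
        have hp₀mem : p₀ ∈ (S2ᶜ ∪ {p₀} : Set P.V) := Or.inr rfl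
        refine ⟨P.induce (S2ᶜ ∪ {p₀}), P.induce S2, ⟨p₀, hp₀mem⟩, ?_, ?_, ?_⟩
        · -- card bound for B-part
          rw [FinGraph.induce, ← Set.ncard_univ P.V]
          show Nat.card ↥(S2ᶜ ∪ {p₀} : Set P.V) < _
          rw [Nat.card_coe_set_eq]
          apply Set.ncard_lt_ncard _ (Set.finite_univ)
          constructor
          · exact Set.subset_univ _
          · intro hsub
            have := hsub (Set.mem_univ p₁)
            rcases this with h | h
            · exact h hp₁
            · exact hp₁0 h
        · rw [FinGraph.induce, ← Set.ncard_univ P.V]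
          show Nat.card ↥(S2 : Set P.V) < _
          rw [Nat.card_coe_set_eq]
          apply Set.ncard_lt_ncard _ (Set.finite_univ)
          exact ⟨Set.subset_univ _, fun hsub => hq (hsub (Set.mem_univ q))⟩
        · -- the isomorphism
          refine ⟨?_⟩
          refine ⟨⟨fun p => if h : p ∈ S2 then Sum.inr ⟨p, h⟩
              else Sum.inl ⟨⟨p, Or.inl h⟩, by
                intro e
                apply h
                have : p = p₀ := congrArg Subtype.val e
                rw [this]; exact hp₀⟩,
            fun x => match x with
              | Sum.inl u => u.1.1
              | Sum.inr w => w.1, ?_, ?_⟩, ?_⟩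
          · intro p
            dsimp only [FinGraph.subst, FinGraph.induce]
            split_ifs with h <;> rfl
          · rintro (u | w)
            · dsimp only [FinGraph.subst, FinGraph.induce]
              have hu : u.1.1 ∉ S2 := by
                intro h
                rcases u.1.2 with h' | h'
                · exact h' h
                · exact u.2 (Subtype.ext h')
              rw [dif_neg hu]
              exact congrArg Sum.inl (Subtype.ext (Subtype.ext rfl))
            · dsimp only [FinGraph.subst, FinGraph.induce]
              rw [dif_pos w.2]
              exact congrArg Sum.inr (Subtype.ext rfl)
          · intro p q
            dsimp only [Equiv.coe_fn_mk, FinGraph.subst, FinGraph.induce]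
            show (Subst (SimpleGraph.induce (S2ᶜ ∪ {p₀}) P.G) (SimpleGraph.induce S2 P.G) ⟨p₀, hp₀mem⟩).Adj (if h : p ∈ S2 then Sum.inr ⟨p, h⟩ else Sum.inl _) (if h : q ∈ S2 then Sum.inr ⟨q, h⟩ else Sum.inl _) ↔ P.G.Adj p q
            split_ifs with hp hq hq
            · exact Iff.of_eq rfl
            · show P.G.Adj q p₀ ↔ _
              rw [← hmod q p hq hp]
              exact P.G.adj_comm q p
            · show P.G.Adj p p₀ ↔ _
              rw [hmod p q hp hq]
            · exact Iff.of_eq rfl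
    · -- everything on the right: embed into B
      right
      push_neg at h1
      have hright : ∀ p : P.V, ∃ w : B.V, f p = Sum.inr w := fun p =>
        Sum.isRight_iff.mp (h1 p)
      choose g hg using hright
      refine ⟨⟨⟨g, ?_⟩, ?_⟩⟩
      · intro p q hpq
        apply f.injective; rw [hg p, hg q, hpq]
      · intro p q
        rw [← f.map_rel_iff, hg p, hg q]
        exact Iff.of_eq rfl
  · -- everything on the left: embed into A
    left
    push_neg at h2
    choose g hg using fun p => hleft p (h2 p)
    refine ⟨⟨⟨fun p => (g p).1, ?_⟩, ?_⟩⟩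
    · intro p q hpq
      apply f.injective
      rw [hg p, hg q]
      exact congrArg _ (Subtype.ext hpq)
    · intro p q
      rw [← f.map_rel_iff, hg p, hg q]
      exact Iff.of_eq rfl

/-- a prime induced subgraph of a member of the substitution closure of
finitely many graphs is an induced subgraph of one of them. -/
theorem stmt3 (t : ℕ) (Fs : Fin t → FinGraph) (A : FinGraph)
    (hA : SClosure (fun B => ∃ i, Nonempty (B.G ≃g (Fs i).G)) A)
    (P : FinGraph) (hP : IsPrime P) (emb : P.G ↪g A.G) :
    ∃ i, Nonempty (P.G ↪g (Fs i).G) := by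
  have main := hA (fun C => ∀ Q : FinGraph, IsPrime Q → Nonempty (Q.G ↪g C.G) →
      ∃ i, Nonempty (Q.G ↪g (Fs i).G)) ?_ ?_ ?_
  · exact main P hP ⟨emb⟩
  · intro C D v hC hD Q hQ ⟨g⟩
    rcases key C D v Q hQ g with g' | g'
    · exact hC Q hQ g'
    · exact hD Q hQ g'
  · intro C D hC ⟨e⟩ Q hQ ⟨g⟩
    exact hC Q hQ ⟨(SimpleGraph.Embedding.comp e.symm.toEmbedding g)⟩
  · rintro C ⟨i, ⟨e⟩⟩ Q hQ ⟨g⟩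
    exact ⟨i, ⟨SimpleGraph.Embedding.comp e.toEmbedding g⟩⟩
end

section
/- Let F be a family of finite graphs closed under substitutions and induced subgraphs, let P be the set of prime graphs in F, and let S be the collection of subfamilies F' ⊆ F that are closed under substitutions and induced subgraphs. If P contains an infinite antichain in the induced-subgraph order, then S has cardinality at least that of the continuum. -/
lemma subst_adj_inl_inr {V1 V2 : Type} (G1 : SimpleGraph V1) (G2 : SimpleGraph V2)
    (v : V1) (u : {u : V1 // u ≠ v}) (w : V2) :
    (Subst G1 G2 v).Adj (Sum.inl u) (Sum.inr w) ↔ G1.Adj u.1 v := Iff.rfl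

lemma prime_subst_embed (P A B : FinGraph) (v : A.V) (hP : IsPrime P)
    (e : P.G ↪g (A.subst B v).G) :
    Nonempty (P.G ↪g A.G) ∨ Nonempty (P.G ↪g B.G) := by
  classical
  set M : Set P.V := {x | ∃ w, e x = Sum.inr w} with hM
  -- module property
  have hmod : ∀ x ∉ M, ∀ u : {u : A.V // u ≠ v}, e x = Sum.inl u →
      ∀ y ∈ M, (P.G.Adj x y ↔ A.G.Adj u.1 v) := by
    intro x hx u hu y hy
    obtain ⟨w, hw⟩ := hy
    rw [← e.map_adj_iff, hu, hw]
    exact Iff.rfl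
  by_cases hall : ∀ x, x ∈ M
  · -- embeds into B
    right
    choose w hw using hall
    refine ⟨⟨⟨w, ?_⟩, ?_⟩⟩
    · intro x y hxy
      apply e.injective
      rw [hw x, hw y, hxy]
    · intro x y
      rw [← e.map_adj_iff, hw x, hw y]
      exact Iff.rfl
  · push_neg at hall
    obtain ⟨z, hz⟩ := hall
    by_cases hss : M.Subsingleton
    · -- embeds into A
      left
      have getu : ∀ x : P.V, x ∉ M → {u : {u : A.V // u ≠ v} // e x = Sum.inl u} := by
        intro x hx
        rcases h : e x with u | w
        · exact ⟨u, rfl⟩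
        · exact absurd ⟨w, h⟩ hx
      let a : P.V → A.V := fun x =>
        if h : x ∈ M then v else ((getu x h).1 : {u : A.V // u ≠ v}).1
      refine ⟨⟨⟨a, ?_⟩, ?_⟩⟩
      · intro x y hxy
        by_cases hx : x ∈ M <;> by_cases hy : y ∈ M <;>
          simp only [a, hx, hy, dif_pos, dif_neg, not_false_iff] at hxy
        · exact hss hx hy
        · exact absurd hxy.symm (getu y hy).1.2
        · exact absurd hxy (getu x hx).1.2
        · apply e.injective
          rw [(getu x hx).2, (getu y hy).2]
          exact congrArg Sum.inl (Subtype.ext hxy)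
      · intro x y
        show A.G.Adj (a x) (a y) ↔ P.G.Adj x y
        by_cases hx : x ∈ M <;> by_cases hy : y ∈ M <;>
          simp only [a, hx, hy, dif_pos, dif_neg, not_false_iff]
        · have : x = y := hss hx hy
          subst this
          simp
        · rw [SimpleGraph.adj_comm, SimpleGraph.adj_comm _ x y,
            (hmod y hy _ (getu y hy).2 x hx)]
        · exact (hmod x hx _ (getu x hx).2 y hy).symm
        · have hmap := @SimpleGraph.Embedding.map_adj_iff _ _ _ _ e x y
          rw [(getu x hx).2, (getu y hy).2] at hmap
          exact hmap
    · -- M is a nontrivial module: contradict primeness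
      exfalso
      rw [Set.not_subsingleton_iff] at hss
      obtain ⟨x₀, hx₀, x₁, hx₁, hne⟩ := hss
      set s : Set P.V := Mᶜ ∪ {x₀} with hs
      have hx₀s : x₀ ∈ s := Or.inr rfl
      set FA := P.induce s with hFA
      set FB := P.induce M with hFB
      set v' : FA.V := ⟨x₀, hx₀s⟩ with hv'
      -- build the isomorphism (FA.subst FB v').G ≃g P.G
      have hmem : ∀ u : {u : FA.V // u ≠ v'}, (u.1.1 : P.V) ∉ M := by
        rintro ⟨⟨x, hxs⟩, hu⟩
        rcases hxs with h | h
        · exact h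
        · have hx : x = x₀ := h
          exact absurd (Subtype.ext hx) hu
      let toF : ({u : FA.V // u ≠ v'} ⊕ FB.V) → P.V := fun x =>
        match x with
        | Sum.inl u => u.1.1
        | Sum.inr w => w.1
      let invF : P.V → ({u : FA.V // u ≠ v'} ⊕ FB.V) := fun x =>
        if h : x ∈ M then Sum.inr ⟨x, h⟩
        else Sum.inl ⟨⟨x, Or.inl h⟩, fun hc => h (by
          have : x = x₀ := congrArg Subtype.val hc
          rw [this]; exact hx₀)⟩
      have hadj : ∀ x y : {u : FA.V // u ≠ v'} ⊕ FB.V,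
          P.G.Adj (toF x) (toF y) ↔ ((FA.subst FB v').G).Adj x y := by
        rintro (u | w) (u' | w')
        · exact Iff.rfl
        · -- use module property
          have hu : (u.1.1 : P.V) ∉ M := hmem u
          obtain ⟨eu, heu⟩ : ∃ eu, e u.1.1 = Sum.inl eu := by
            rcases h : e u.1.1 with a | b
            · exact ⟨a, rfl⟩
            · exact absurd ⟨b, h⟩ hu
          have h1 := hmod u.1.1 hu eu heu x₀ hx₀
          have h2 := hmod u.1.1 hu eu heu w'.1 w'.2
          show P.G.Adj u.1.1 w'.1 ↔ P.G.Adj u.1.1 x₀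
          rw [h1, h2]
        · have hu : (u'.1.1 : P.V) ∉ M := hmem u'
          obtain ⟨eu, heu⟩ : ∃ eu, e u'.1.1 = Sum.inl eu := by
            rcases h : e u'.1.1 with a | b
            · exact ⟨a, rfl⟩
            · exact absurd ⟨b, h⟩ hu
          have h1 := hmod u'.1.1 hu eu heu x₀ hx₀
          have h2 := hmod u'.1.1 hu eu heu w.1 w.2
          show P.G.Adj w.1 u'.1.1 ↔ P.G.Adj u'.1.1 x₀
          rw [SimpleGraph.adj_comm, h1, h2]
        · exact Iff.rfl
      have hli : Function.LeftInverse invF toF := by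
        rintro (u | w)
        · have hu : (u.1.1 : P.V) ∉ M := hmem u
          simp only [toF, invF, dif_neg hu]
          congr 1
        · simp only [toF, invF, dif_pos w.2]
          exact congrArg Sum.inr (Subtype.ext rfl)
      have hri : Function.RightInverse invF toF := by
        intro x
        by_cases h : x ∈ M <;> simp [toF, invF, h]
      let ψ : (FA.subst FB v').G ≃g P.G :=
        ⟨⟨toF, invF, hli, hri⟩, by intro x y; exact hadj x y⟩
      -- cardinalities
      have hfinP : Finite P.V := P.finV
      have hc1 : Nat.card FA.V < Nat.card P.V := by
        have : s ⊂ Set.univ := by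
          refine ⟨Set.subset_univ s, fun hsu => ?_⟩
          have : x₁ ∈ s := hsu (Set.mem_univ x₁)
          rcases this with h | h
          · exact h hx₁
          · exact hne.symm h
        have := Set.ncard_lt_ncard this (Set.finite_univ)
        exact (Nat.card_coe_set_eq s).trans_lt (by simpa [Set.ncard_univ] using this)
      have hc2 : Nat.card FB.V < Nat.card P.V := by
        have : M ⊂ Set.univ := by
          refine ⟨Set.subset_univ M, fun hsu => hz (hsu (Set.mem_univ z))⟩
        have := Set.ncard_lt_ncard this (Set.finite_univ)
        exact (Nat.card_coe_set_eq M).trans_lt (by simpa [Set.ncard_univ] using this)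
      exact hP ⟨FA, FB, v', hc1, hc2, ⟨ψ.symm⟩⟩

/-- if the primes of a substitution- and induced-subgraph-closed family
contain an infinite antichain, the collection of closed subfamilies has size ≥ continuum. -/
theorem stmt6 (F : FinGraph → Prop) (hiso : ClosedIso F) (hsub : ClosedSubst F)
    (hind : ClosedInduced F)
    (hanti : ∃ f : ℕ → FinGraph, (∀ n, F (f n) ∧ IsPrime (f n)) ∧
      ∀ n m, n ≠ m → ¬ Nonempty ((f n).G ↪g (f m).G)) :
    Cardinal.continuum ≤ Cardinal.mk
      {F' : FinGraph → Prop //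
        (∀ A, F' A → F A) ∧ ClosedSubst F' ∧ ClosedIso F' ∧ ClosedInduced F'} := by
  classical
  obtain ⟨f, hf, hanti⟩ := hanti
  set Fam : Set ℕ → (FinGraph → Prop) := fun S A =>
    F A ∧ ∀ n, n ∉ S → ¬ Nonempty ((f n).G ↪g A.G) with hFam
  have hsubset : ∀ S, ∀ A, Fam S A → F A := fun S A h => h.1
  have hcsub : ∀ S, ClosedSubst (Fam S) := by
    intro S A B v hA hB
    refine ⟨hsub A B v hA.1 hB.1, fun n hn ⟨emb⟩ => ?_⟩
    rcases prime_subst_embed (f n) A B v (hf n).2 emb with h | h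
    · exact hA.2 n hn h
    · exact hB.2 n hn h
  have hciso : ∀ S, ClosedIso (Fam S) := by
    intro S A B hA ⟨iso⟩
    refine ⟨hiso A B hA.1 ⟨iso⟩, fun n hn ⟨emb⟩ => ?_⟩
    exact hA.2 n hn ⟨(iso.symm.toEmbedding).comp emb⟩
  have hcind : ∀ S, ClosedInduced (Fam S) := by
    intro S A s hA
    refine ⟨hind A s hA.1, fun n hn ⟨emb⟩ => ?_⟩
    exact hA.2 n hn ⟨(SimpleGraph.Embedding.induce s).comp emb⟩
  let g : Set ℕ → {F' : FinGraph → Prop //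
      (∀ A, F' A → F A) ∧ ClosedSubst F' ∧ ClosedIso F' ∧ ClosedInduced F'} :=
    fun S => ⟨Fam S, hsubset S, hcsub S, hciso S, hcind S⟩
  have hmemiff : ∀ S n, Fam S (f n) ↔ n ∈ S := by
    intro S n
    constructor
    · intro h
      by_contra hn
      exact h.2 n hn ⟨SimpleGraph.Embedding.refl⟩
    · intro hn
      refine ⟨(hf n).1, fun m hm ⟨emb⟩ => ?_⟩
      rcases eq_or_ne m n with rfl | hmn
      · exact hm hn
      · exact hanti m n hmn ⟨emb⟩
  have hginj : Function.Injective g := by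
    intro S T hST
    have h1 : Fam S = Fam T := congrArg Subtype.val hST
    ext n
    rw [← hmemiff S n, h1, hmemiff T n]
  have hlift : Cardinal.lift.{1} (Cardinal.mk (Set ℕ)) ≤ Cardinal.mk
      {F' : FinGraph → Prop //
        (∀ A, F' A → F A) ∧ ClosedSubst F' ∧ ClosedIso F' ∧ ClosedInduced F'} := by
    rw [← Cardinal.mk_uLift]
    exact Cardinal.mk_le_of_injective
      (f := fun S : ULift (Set ℕ) => g S.down)
      (fun a b hab => ULift.ext a b (hginj hab))
  have hcont : Cardinal.mk (Set ℕ) = Cardinal.continuum := by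
    rw [Cardinal.mk_set, Cardinal.mk_nat, Cardinal.two_power_aleph0]
  rw [hcont, Cardinal.lift_continuum] at hlift
  exact hlift
end

section
/- For n ≥ 6, let G_n be the graph obtained from the path P_n with vertex set {1,...,n} (edges {i,i+1}) by adding four vertices a, b, c, d and edges {a,b}, {c,d}, {a,2}, {b,3}, {c,n−2}, {d,n−1}. Then for all 6 ≤ n < m, the graph G_n is not isomorphic to an induced subgraph of G_m; i.e., {G_n : n ≥ 6} is an infinite antichain in the induced-subgraph order. -/
/-- The graph `G_n` from the paper: the path on vertices `1, …, n` (here `Fin n`,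
0-based) together with four extra vertices `a, b, c, d` (here `Fin 4`: `0 ↦ a`,
`1 ↦ b`, `2 ↦ c`, `3 ↦ d`) and edges `{a,b}, {c,d}, {a,2}, {b,3}, {c,n-2}, {d,n-1}`
(paper's 1-based labels). -/
def Gn (n : ℕ) : SimpleGraph (Fin n ⊕ Fin 4) :=
  SimpleGraph.fromRel fun x y =>
    match x, y with
    | Sum.inl i, Sum.inl j => (i : ℕ) + 1 = (j : ℕ)
    | Sum.inr a, Sum.inr b => (a = 0 ∧ b = 1) ∨ (a = 2 ∧ b = 3)
    | Sum.inr a, Sum.inl i => (a = 0 ∧ (i : ℕ) = 1) ∨ (a = 1 ∧ (i : ℕ) = 2) ∨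
        (a = 2 ∧ (i : ℕ) = n - 3) ∨ (a = 3 ∧ (i : ℕ) = n - 2)
    | Sum.inl _, Sum.inr _ => False

namespace Stmt8Aux

lemma adjP {n j k : ℕ} (hj : j < n) (hk : k < n) (h : j + 1 = k) :
    (Gn n).Adj (Sum.inl ⟨j, hj⟩) (Sum.inl ⟨k, hk⟩) := by
  simp [Gn, SimpleGraph.fromRel_adj]; omega

lemma adjR0 {n : ℕ} (h1 : 1 < n) : (Gn n).Adj (Sum.inr 0) (Sum.inl ⟨1, h1⟩) := by
  simp [Gn, SimpleGraph.fromRel_adj]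

lemma adjR1 {n : ℕ} (h2 : 2 < n) : (Gn n).Adj (Sum.inr 1) (Sum.inl ⟨2, h2⟩) := by
  simp [Gn, SimpleGraph.fromRel_adj]

lemma adjR01 {n : ℕ} : (Gn n).Adj (Sum.inr 0) (Sum.inr (1 : Fin 4)) := by
  simp [Gn, SimpleGraph.fromRel_adj]

lemma adjR2 {n k : ℕ} (hk : k < n) (h : k = n - 3) :
    (Gn n).Adj (Sum.inr 2) (Sum.inl ⟨k, hk⟩) := by
  simp [Gn, SimpleGraph.fromRel_adj]; omega

variable {m : ℕ} {x : Fin m ⊕ Fin 4}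

lemma L0 (hm : 7 ≤ m) (h : (Gn m).Adj x (Sum.inl ⟨0, by omega⟩)) :
    x = Sum.inl ⟨1, by omega⟩ := by
  rcases x with ⟨j, hj⟩ | a
  · simp [Gn, SimpleGraph.fromRel_adj] at h ⊢; omega
  · fin_cases a <;> simp [Gn, SimpleGraph.fromRel_adj] at h ⊢ <;> omega

lemma L1 (hm : 7 ≤ m) (h : (Gn m).Adj x (Sum.inl ⟨1, by omega⟩)) :
    x = Sum.inl ⟨0, by omega⟩ ∨ x = Sum.inl ⟨2, by omega⟩ ∨ x = Sum.inr 0 := by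
  rcases x with ⟨j, hj⟩ | a
  · simp [Gn, SimpleGraph.fromRel_adj] at h ⊢; omega
  · fin_cases a <;> simp [Gn, SimpleGraph.fromRel_adj] at h ⊢ <;> omega

lemma L2 (hm : 7 ≤ m) (h : (Gn m).Adj x (Sum.inl ⟨2, by omega⟩)) :
    x = Sum.inl ⟨1, by omega⟩ ∨ x = Sum.inl ⟨3, by omega⟩ ∨ x = Sum.inr 1 := by
  rcases x with ⟨j, hj⟩ | a
  · simp [Gn, SimpleGraph.fromRel_adj] at h ⊢; omega
  · fin_cases a <;> simp [Gn, SimpleGraph.fromRel_adj] at h ⊢ <;> omega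

lemma Lmid (hm : 7 ≤ m) {k : ℕ} (h3 : 3 ≤ k) (h4 : k ≤ m - 4)
    (h : (Gn m).Adj x (Sum.inl ⟨k, by omega⟩)) :
    x = Sum.inl ⟨k - 1, by omega⟩ ∨ x = Sum.inl ⟨k + 1, by omega⟩ := by
  rcases x with ⟨j, hj⟩ | a
  · simp [Gn, SimpleGraph.fromRel_adj] at h ⊢; omega
  · fin_cases a <;> simp [Gn, SimpleGraph.fromRel_adj] at h ⊢ <;> omega

lemma LC (hm : 7 ≤ m) (h : (Gn m).Adj x (Sum.inl ⟨m - 3, by omega⟩)) :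
    x = Sum.inl ⟨m - 4, by omega⟩ ∨ x = Sum.inl ⟨m - 2, by omega⟩ ∨ x = Sum.inr 2 := by
  rcases x with ⟨j, hj⟩ | a
  · simp [Gn, SimpleGraph.fromRel_adj] at h ⊢; omega
  · fin_cases a <;> simp [Gn, SimpleGraph.fromRel_adj] at h ⊢ <;> omega

lemma LD (hm : 7 ≤ m) (h : (Gn m).Adj x (Sum.inl ⟨m - 2, by omega⟩)) :
    x = Sum.inl ⟨m - 3, by omega⟩ ∨ x = Sum.inl ⟨m - 1, by omega⟩ ∨ x = Sum.inr 3 := by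
  rcases x with ⟨j, hj⟩ | a
  · simp [Gn, SimpleGraph.fromRel_adj] at h ⊢; omega
  · fin_cases a <;> simp [Gn, SimpleGraph.fromRel_adj] at h ⊢ <;> omega

lemma LE (hm : 7 ≤ m) (h : (Gn m).Adj x (Sum.inl ⟨m - 1, by omega⟩)) :
    x = Sum.inl ⟨m - 2, by omega⟩ := by
  rcases x with ⟨j, hj⟩ | a
  · simp [Gn, SimpleGraph.fromRel_adj] at h ⊢; omega
  · fin_cases a <;> simp [Gn, SimpleGraph.fromRel_adj] at h ⊢ <;> omega

lemma Lr0 (hm : 7 ≤ m) (h : (Gn m).Adj x (Sum.inr 0)) :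
    x = Sum.inr 1 ∨ x = Sum.inl ⟨1, by omega⟩ := by
  rcases x with ⟨j, hj⟩ | a
  · simp [Gn, SimpleGraph.fromRel_adj] at h ⊢; omega
  · fin_cases a <;> simp [Gn, SimpleGraph.fromRel_adj] at h ⊢ <;> omega

lemma Lr1 (hm : 7 ≤ m) (h : (Gn m).Adj x (Sum.inr 1)) :
    x = Sum.inr 0 ∨ x = Sum.inl ⟨2, by omega⟩ := by
  rcases x with ⟨j, hj⟩ | a
  · simp [Gn, SimpleGraph.fromRel_adj] at h ⊢; omega
  · fin_cases a <;> simp [Gn, SimpleGraph.fromRel_adj] at h ⊢ <;> omega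

lemma Lr2 (hm : 7 ≤ m) (h : (Gn m).Adj x (Sum.inr 2)) :
    x = Sum.inr 3 ∨ x = Sum.inl ⟨m - 3, by omega⟩ := by
  rcases x with ⟨j, hj⟩ | a
  · simp [Gn, SimpleGraph.fromRel_adj] at h ⊢; omega
  · fin_cases a <;> simp [Gn, SimpleGraph.fromRel_adj] at h ⊢ <;> omega

lemma Lr3 (hm : 7 ≤ m) (h : (Gn m).Adj x (Sum.inr 3)) :
    x = Sum.inr 2 ∨ x = Sum.inl ⟨m - 2, by omega⟩ := by
  rcases x with ⟨j, hj⟩ | a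
  · simp [Gn, SimpleGraph.fromRel_adj] at h ⊢; omega
  · fin_cases a <;> simp [Gn, SimpleGraph.fromRel_adj] at h ⊢ <;> omega

lemma Lgen (hm : 7 ≤ m) {k : ℕ} (hk : k < m) (hk1 : k ≠ 1) (hk2 : k ≠ 2)
    (hk3 : k ≠ m - 3) (hk4 : k ≠ m - 2)
    (h : (Gn m).Adj x (Sum.inl ⟨k, hk⟩)) :
    x = Sum.inl ⟨k - 1, by omega⟩ ∨ x = Sum.inl ⟨min (k + 1) (m - 1), by omega⟩ := by
  rcases x with ⟨j, hj⟩ | a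
  · simp [Gn, SimpleGraph.fromRel_adj] at h ⊢; omega
  · fin_cases a <;> simp [Gn, SimpleGraph.fromRel_adj] at h ⊢ <;> omega

lemma deg3 (hm : 7 ≤ m) {v x1 x2 x3 : Fin m ⊕ Fin 4}
    (a1 : (Gn m).Adj x1 v) (a2 : (Gn m).Adj x2 v) (a3 : (Gn m).Adj x3 v)
    (d12 : x1 ≠ x2) (d13 : x1 ≠ x3) (d23 : x2 ≠ x3) :
    v = Sum.inl ⟨1, by omega⟩ ∨ v = Sum.inl ⟨2, by omega⟩ ∨
      v = Sum.inl ⟨m - 3, by omega⟩ ∨ v = Sum.inl ⟨m - 2, by omega⟩ := by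
  by_contra hcon
  push_neg at hcon
  obtain ⟨h1, h2, h3, h4⟩ := hcon
  rcases v with ⟨k, hk⟩ | a
  · simp only [ne_eq, Sum.inl.injEq, Fin.mk.injEq] at h1 h2 h3 h4
    rcases Lgen hm hk h1 h2 h3 h4 a1 with e1 | e1 <;>
    rcases Lgen hm hk h1 h2 h3 h4 a2 with e2 | e2 <;>
    rcases Lgen hm hk h1 h2 h3 h4 a3 with e3 | e3 <;>
      first
        | exact d12 (e1.trans e2.symm)
        | exact d13 (e1.trans e3.symm)
        | exact d23 (e2.trans e3.symm)
  · fin_cases a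
    · rcases Lr0 hm a1 with e1 | e1 <;> rcases Lr0 hm a2 with e2 | e2 <;>
      rcases Lr0 hm a3 with e3 | e3 <;>
        first
          | exact d12 (e1.trans e2.symm)
          | exact d13 (e1.trans e3.symm)
          | exact d23 (e2.trans e3.symm)
    · rcases Lr1 hm a1 with e1 | e1 <;> rcases Lr1 hm a2 with e2 | e2 <;>
      rcases Lr1 hm a3 with e3 | e3 <;>
        first
          | exact d12 (e1.trans e2.symm)
          | exact d13 (e1.trans e3.symm)
          | exact d23 (e2.trans e3.symm)
    · rcases Lr2 hm a1 with e1 | e1 <;> rcases Lr2 hm a2 with e2 | e2 <;>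
      rcases Lr2 hm a3 with e3 | e3 <;>
        first
          | exact d12 (e1.trans e2.symm)
          | exact d13 (e1.trans e3.symm)
          | exact d23 (e2.trans e3.symm)
    · rcases Lr3 hm a1 with e1 | e1 <;> rcases Lr3 hm a2 with e2 | e2 <;>
      rcases Lr3 hm a3 with e3 | e3 <;>
        first
          | exact d12 (e1.trans e2.symm)
          | exact d13 (e1.trans e3.symm)
          | exact d23 (e2.trans e3.symm)

end Stmt8Aux


open Stmt8Aux

/-- the graphs `G_n`, `n ≥ 6`, form an infinite antichain in the
induced-subgraph order. -/
theorem stmt8 (n m : ℕ) (hn : 6 ≤ n) (hm : n < m) :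
    ¬ Nonempty (Gn n ↪g Gn m) := by
  rintro ⟨f⟩
  have hm7 : 7 ≤ m := by omega
  have inj : Function.Injective f := f.injective
  have madj : ∀ a b, (Gn n).Adj a b → (Gn m).Adj (f a) (f b) :=
    fun a b h => f.map_rel_iff.mpr h
  -- the three degree-3 membership facts
  have hv1 := deg3 hm7
    (madj _ _ (adjP (show 0 < n by omega) (show 1 < n by omega) rfl))
    (madj _ _ ((adjP (show 1 < n by omega) (show 2 < n by omega) rfl).symm))
    (madj _ _ (adjR0 (show 1 < n by omega)))
    (fun e => by simpa using inj e) (fun e => by simpa using inj e)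
    (fun e => by simpa using inj e)
  have hv2 := deg3 hm7
    (madj _ _ (adjP (show 1 < n by omega) (show 2 < n by omega) rfl))
    (madj _ _ ((adjP (show 2 < n by omega) (show 3 < n by omega) rfl).symm))
    (madj _ _ (adjR1 (show 2 < n by omega)))
    (fun e => by simpa using inj e) (fun e => by simpa using inj e)
    (fun e => by simpa using inj e)
  have hv3 := deg3 hm7
    (madj _ _ (adjP (show n - 4 < n by omega) (show n - 3 < n by omega) (by omega)))
    (madj _ _ ((adjP (show n - 3 < n by omega) (show n - 2 < n by omega) (by omega)).symm))
    (madj _ _ (adjR2 (show n - 3 < n by omega) rfl))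
    (fun e => by have := inj e; simp at this; omega)
    (fun e => by have := inj e; simp at this)
    (fun e => by have := inj e; simp at this)
  rcases hv1 with h1 | h1 | h1 | h1
  -- CASE 1 : f(inl 1) = inl 1
  · have hadj2 : (Gn m).Adj (f (Sum.inl ⟨2, by omega⟩)) (Sum.inl ⟨1, by omega⟩) := by
      have a := madj _ _ ((adjP (show 1 < n by omega) (show 2 < n by omega) rfl).symm)
      rwa [h1] at a
    have h2 : f (Sum.inl ⟨2, by omega⟩) = Sum.inl ⟨2, by omega⟩ := by
      rcases L1 hm7 hadj2 with e | e | e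
      · rw [e] at hv2; simp at hv2; omega
      · exact e
      · rw [e] at hv2; simp at hv2
    have hfr0 : f (Sum.inr 0) = Sum.inr 0 := by
      have a := madj _ _ (adjR0 (show 1 < n by omega))
      rw [h1] at a
      rcases L1 hm7 a with e | e | e
      · exfalso
        have a2 := madj _ _ (adjR01 (n := n)).symm
        rw [e] at a2
        have e2 := L0 hm7 a2
        exact (by simpa using inj (e2.trans h1.symm))
      · exact absurd (inj (e.trans h2.symm)) (by simp)
      · exact e
    have hfr1 : f (Sum.inr 1) = Sum.inr 1 := by
      have a := madj _ _ (adjR01 (n := n)).symm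
      rw [hfr0] at a
      rcases Lr0 hm7 a with e | e
      · exact e
      · exact absurd (inj (e.trans h1.symm)) (by simp)
    have h3 : f (Sum.inl ⟨3, by omega⟩) = Sum.inl ⟨3, by omega⟩ := by
      have a := madj _ _ ((adjP (show 2 < n by omega) (show 3 < n by omega) rfl).symm)
      rw [h2] at a
      rcases L2 hm7 a with e | e | e
      · exact absurd (inj (e.trans h1.symm)) (by simp)
      · exact e
      · exact absurd (inj (e.trans hfr1.symm)) (by simp)
    have key : ∀ k, ∀ _ : 3 ≤ k, ∀ _ : k ≤ n - 3,
        f (Sum.inl ⟨k, by omega⟩) = Sum.inl ⟨k, by omega⟩ ∧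
        f (Sum.inl ⟨k - 1, by omega⟩) = Sum.inl ⟨k - 1, by omega⟩ := by
      intro k hk3
      induction k, hk3 using Nat.le_induction with
      | base => exact fun _ => ⟨h3, h2⟩
      | succ k hk ih =>
        intro hkn
        obtain ⟨ihk, ihk'⟩ := ih (by omega)
        have a := (madj _ _ (adjP (show k < n by omega) (show k + 1 < n by omega) rfl))
        rw [ihk] at a
        rcases Lmid hm7 (show 3 ≤ k by omega) (show k ≤ m - 4 by omega) a.symm with e | e
        · exfalso
          have e2 := inj (e.trans ihk'.symm)
          simp at e2; omega
        · exact ⟨e, ihk⟩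
    obtain ⟨hend, -⟩ := key (n - 3) (by omega) le_rfl
    rw [hend] at hv3
    simp at hv3
    omega
  -- CASE 2 : f(inl 1) = inl 2
  · have hadj2 : (Gn m).Adj (f (Sum.inl ⟨2, by omega⟩)) (Sum.inl ⟨2, by omega⟩) := by
      have a := madj _ _ ((adjP (show 1 < n by omega) (show 2 < n by omega) rfl).symm)
      rwa [h1] at a
    have h2 : f (Sum.inl ⟨2, by omega⟩) = Sum.inl ⟨1, by omega⟩ := by
      rcases L2 hm7 hadj2 with e | e | e
      · exact e
      · rw [e] at hv2; simp at hv2; omega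
      · rw [e] at hv2; simp at hv2
    have hfr0 : f (Sum.inr 0) = Sum.inr 1 := by
      have a := madj _ _ (adjR0 (show 1 < n by omega))
      rw [h1] at a
      rcases L2 hm7 a with e | e | e
      · exact absurd (inj (e.trans h2.symm)) (by simp)
      · exfalso
        have a2 := madj _ _ (adjR01 (n := n)).symm
        rw [e] at a2
        -- f(inr 1) ∈ {inl 2, inl 4}
        have a3 := madj _ _ (adjR1 (show 2 < n by omega))
        rw [h2] at a3
        rcases Lmid hm7 (show 3 ≤ 3 by omega) (show 3 ≤ m - 4 by omega) a2 with e2 | e2 <;>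
          rcases L1 hm7 a3 with e3 | e3 | e3 <;>
          first
            | (exact absurd (inj (e3.trans h1.symm)) (by simp))
            | (have := e2.symm.trans e3; simp at this; omega)
            | (have := e2.symm.trans e3; simp at this)
            | (rw [e2] at e3; simp at e3)
      · exact e
    have hfr1 : f (Sum.inr 1) = Sum.inr 0 := by
      have a := madj _ _ (adjR01 (n := n)).symm
      rw [hfr0] at a
      rcases Lr1 hm7 a with e | e
      · exact e
      · exact absurd (inj (e.trans h1.symm)) (by simp)
    have h3 : f (Sum.inl ⟨3, by omega⟩) = Sum.inl ⟨0, by omega⟩ := by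
      have a := madj _ _ ((adjP (show 2 < n by omega) (show 3 < n by omega) rfl).symm)
      rw [h2] at a
      rcases L1 hm7 a with e | e | e
      · exact e
      · exact absurd (inj (e.trans h1.symm)) (by simp)
      · exact absurd (inj (e.trans hfr1.symm)) (by simp)
    have a := madj _ _ (adjP (show 3 < n by omega) (show 4 < n by omega) rfl)
    rw [h3] at a
    have e := L0 hm7 a.symm
    exact absurd (inj (e.trans h2.symm)) (by simp)
  -- CASE 3 : f(inl 1) = inl (m-3)
  · have hadj2 : (Gn m).Adj (f (Sum.inl ⟨2, by omega⟩)) (Sum.inl ⟨m - 3, by omega⟩) := by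
      have a := madj _ _ ((adjP (show 1 < n by omega) (show 2 < n by omega) rfl).symm)
      rwa [h1] at a
    have h2 : f (Sum.inl ⟨2, by omega⟩) = Sum.inl ⟨m - 2, by omega⟩ := by
      rcases LC hm7 hadj2 with e | e | e
      · rw [e] at hv2; simp at hv2; omega
      · exact e
      · rw [e] at hv2; simp at hv2
    have hfr0 : f (Sum.inr 0) = Sum.inr 2 := by
      have a := madj _ _ (adjR0 (show 1 < n by omega))
      rw [h1] at a
      rcases LC hm7 a with e | e | e
      · exfalso
        have a2 := madj _ _ (adjR01 (n := n)).symm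
        rw [e] at a2
        have a3 := madj _ _ (adjR1 (show 2 < n by omega))
        rw [h2] at a3
        rcases Lmid hm7 (show 3 ≤ m - 4 by omega) (show m - 4 ≤ m - 4 by omega) a2 with e2 | e2 <;>
          rcases LD hm7 a3 with e3 | e3 | e3 <;>
          first
            | (exact absurd (inj (e3.trans h1.symm)) (by simp))
            | (have := e2.symm.trans e3; simp at this; omega)
            | (have := e2.symm.trans e3; simp at this)
            | (rw [e2] at e3; simp at e3)
      · exact absurd (inj (e.trans h2.symm)) (by simp)
      · exact e
    have hfr1 : f (Sum.inr 1) = Sum.inr 3 := by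
      have a := madj _ _ (adjR01 (n := n)).symm
      rw [hfr0] at a
      rcases Lr2 hm7 a with e | e
      · exact e
      · exact absurd (inj (e.trans h1.symm)) (by simp)
    have h3 : f (Sum.inl ⟨3, by omega⟩) = Sum.inl ⟨m - 1, by omega⟩ := by
      have a := madj _ _ ((adjP (show 2 < n by omega) (show 3 < n by omega) rfl).symm)
      rw [h2] at a
      rcases LD hm7 a with e | e | e
      · exact absurd (inj (e.trans h1.symm)) (by simp)
      · exact e
      · exact absurd (inj (e.trans hfr1.symm)) (by simp)
    have a := madj _ _ (adjP (show 3 < n by omega) (show 4 < n by omega) rfl)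
    rw [h3] at a
    have e := LE hm7 a.symm
    exact absurd (inj (e.trans h2.symm)) (by simp)
  -- CASE 4 : f(inl 1) = inl (m-2)
  · have hadj2 : (Gn m).Adj (f (Sum.inl ⟨2, by omega⟩)) (Sum.inl ⟨m - 2, by omega⟩) := by
      have a := madj _ _ ((adjP (show 1 < n by omega) (show 2 < n by omega) rfl).symm)
      rwa [h1] at a
    have h2 : f (Sum.inl ⟨2, by omega⟩) = Sum.inl ⟨m - 3, by omega⟩ := by
      rcases LD hm7 hadj2 with e | e | e
      · exact e
      · rw [e] at hv2; simp at hv2; omega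
      · rw [e] at hv2; simp at hv2
    have hfr0 : f (Sum.inr 0) = Sum.inr 3 := by
      have a := madj _ _ (adjR0 (show 1 < n by omega))
      rw [h1] at a
      rcases LD hm7 a with e | e | e
      · exact absurd (inj (e.trans h2.symm)) (by simp)
      · exfalso
        have a2 := madj _ _ (adjR01 (n := n)).symm
        rw [e] at a2
        have e2 := LE hm7 a2
        exact absurd (inj (e2.trans h1.symm)) (by simp)
      · exact e
    have hfr1 : f (Sum.inr 1) = Sum.inr 2 := by
      have a := madj _ _ (adjR01 (n := n)).symm
      rw [hfr0] at a
      rcases Lr3 hm7 a with e | e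
      · exact e
      · exact absurd (inj (e.trans h1.symm)) (by simp)
    have h3 : f (Sum.inl ⟨3, by omega⟩) = Sum.inl ⟨m - 4, by omega⟩ := by
      have a := madj _ _ ((adjP (show 2 < n by omega) (show 3 < n by omega) rfl).symm)
      rw [h2] at a
      rcases LC hm7 a with e | e | e
      · exact e
      · exact absurd (inj (e.trans h1.symm)) (by simp)
      · exact absurd (inj (e.trans hfr1.symm)) (by simp)
    have key : ∀ k, ∀ _ : 3 ≤ k, ∀ _ : k ≤ n - 3,
        f (Sum.inl ⟨k, by omega⟩) = Sum.inl ⟨m - 1 - k, by omega⟩ ∧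
        f (Sum.inl ⟨k - 1, by omega⟩) = Sum.inl ⟨m - k, by omega⟩ := by
      intro k hk3
      induction k, hk3 using Nat.le_induction with
      | base =>
        refine fun _ => ⟨h3.trans ?_, h2.trans ?_⟩ <;>
          (simp only [Sum.inl.injEq, Fin.mk.injEq]; try omega)
      | succ k hk ih =>
        intro hkn
        obtain ⟨ihk, ihk'⟩ := ih (by omega)
        have a := (madj _ _ (adjP (show k < n by omega) (show k + 1 < n by omega) rfl))
        rw [ihk] at a
        rcases Lmid hm7 (show 3 ≤ m - 1 - k by omega) (show m - 1 - k ≤ m - 4 by omega)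
            a.symm with e | e
        · refine ⟨e.trans ?_, ihk.trans ?_⟩ <;>
            (simp only [Sum.inl.injEq, Fin.mk.injEq]; omega)
        · exfalso
          have e2 : f (Sum.inl ⟨k + 1, by omega⟩) = f (Sum.inl ⟨k - 1, by omega⟩) :=
            e.trans ((show (Sum.inl ⟨m - 1 - k + 1, by omega⟩ : Fin m ⊕ Fin 4) =
              Sum.inl ⟨m - k, by omega⟩ by
                simp only [Sum.inl.injEq, Fin.mk.injEq]; omega).trans ihk'.symm)
          have := inj e2
          simp at this; omega
    obtain ⟨hend, -⟩ := key (n - 3) (by omega) le_rfl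
    rw [hend] at hv3
    simp at hv3
    omega
end

section
/- Let G be a nontrivial finite graph and let n ≥ 3 with n ≤ VC'(G). Suppose t ∈ ℕ satisfies ∑_{i=0}^{t−1} binom(n,i) < (2^n − 2)/n. Then VC(G) ≥ t. -/
/-- The VC dimension of (neighborhoods of) a graph: the largest size of a set of
vertices shattered by vertex neighborhoods. -/
noncomputable def VCdim {V : Type} (G : SimpleGraph V) : ℕ :=
  sSup {n | ∃ U : Set V, (∀ A ⊆ U, ∃ v, G.neighborSet v ∩ U = A) ∧ U.ncard = n}

/-- The VC' dimension of a graph: the largest size of a set of vertices almost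
shattered by vertex neighborhoods. -/
noncomputable def VCdim' {V : Type} (G : SimpleGraph V) : ℕ :=
  sSup {n | ∃ U : Set V,
    (∀ A : Set V, A ⊆ U → A ≠ ∅ → A ≠ U → ∃ v, G.neighborSet v ∩ U = A \ {v}) ∧
    U.ncard = n}

/-- if `3 ≤ n ≤ VC'(G)` and `∑_{i<t} C(n,i) < (2^n - 2)/n` then `VC(G) ≥ t`. -/
theorem stmt13 {V : Type} [Fintype V] [Nonempty V] (G : SimpleGraph V) (n t : ℕ)
    (hn : 3 ≤ n) (hn' : n ≤ VCdim' G)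
    (ht : (∑ i ∈ Finset.range t, (n.choose i : ℝ)) < ((2 : ℝ) ^ n - 2) / n) :
    t ≤ VCdim G := by
  classical
  have hnpos : 0 < n := by omega
  -- boundedness of the defining sets
  have hbdd' : BddAbove {m | ∃ U : Set V,
      (∀ A : Set V, A ⊆ U → A ≠ ∅ → A ≠ U → ∃ v, G.neighborSet v ∩ U = A \ {v}) ∧
      U.ncard = m} := by
    refine ⟨Fintype.card V, ?_⟩
    rintro m ⟨U, -, rfl⟩
    simpa [Set.ncard_univ] using Set.ncard_le_ncard (Set.subset_univ U) Set.finite_univ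
  have hbdd : BddAbove {m | ∃ U : Set V,
      (∀ A ⊆ U, ∃ v, G.neighborSet v ∩ U = A) ∧ U.ncard = m} := by
    refine ⟨Fintype.card V, ?_⟩
    rintro m ⟨U, -, rfl⟩
    simpa [Set.ncard_univ] using Set.ncard_le_ncard (Set.subset_univ U) Set.finite_univ
  have hne' : ({m | ∃ U : Set V,
      (∀ A : Set V, A ⊆ U → A ≠ ∅ → A ≠ U → ∃ v, G.neighborSet v ∩ U = A \ {v}) ∧
      U.ncard = m} : Set ℕ).Nonempty := by
    refine ⟨0, ∅, ?_, by simp⟩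
    intro A hA hA0 _
    exact absurd (Set.subset_empty_iff.mp hA) hA0
  -- extract a maximum almost-shattered set U₀
  obtain ⟨U₀, hP₀, hcard₀⟩ := Nat.sSup_mem hne' hbdd'
  rw [VCdim'] at hn'
  have hnU₀ : n ≤ U₀.ncard := by rw [hcard₀]; exact hn'
  -- shrink to size exactly n
  obtain ⟨U, hUU₀, hUcard⟩ := Set.exists_subset_card_eq hnU₀
  have hP : ∀ A : Set V, A ⊆ U → A ≠ ∅ → A ≠ U → ∃ v, G.neighborSet v ∩ U = A \ {v} := by
    intro A hAU hA0 hAU'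
    have hAU₀ : A ≠ U₀ := by
      rintro rfl
      exact hAU' (Set.Subset.antisymm hAU hUU₀)
    obtain ⟨v, hv⟩ := hP₀ A (hAU.trans hUU₀) hA0 hAU₀
    refine ⟨v, ?_⟩
    have : G.neighborSet v ∩ U = (G.neighborSet v ∩ U₀) ∩ U := by
      rw [Set.inter_assoc, Set.inter_eq_self_of_subset_right hUU₀]
    rw [this, hv, Set.inter_eq_self_of_subset_left]
    exact (Set.diff_subset.trans hAU)
  -- move to Finsets
  have hUfin : U.Finite := Set.toFinite U
  set Ut : Finset V := hUfin.toFinset with hUt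
  have hUtcoe : (Ut : Set V) = U := hUfin.coe_toFinset
  have hUtcard : Ut.card = n := by
    rw [← hUcard]
    exact (Set.ncard_eq_toFinset_card U hUfin).symm
  set D : Finset (Finset V) := Ut.powerset.filter (fun A => A ≠ ∅ ∧ A ≠ Ut) with hD
  have hex : ∀ A ∈ D, ∃ v, G.neighborSet v ∩ U = ↑A \ {v} := by
    intro A hA
    rw [hD, Finset.mem_filter, Finset.mem_powerset] at hA
    obtain ⟨hsub, hA0, hAU⟩ := hA
    refine hP A (by rw [← hUtcoe]; exact_mod_cast hsub) ?_ ?_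
    · simpa [Finset.coe_eq_empty] using hA0
    · rw [← hUtcoe]
      intro h
      exact hAU (Finset.coe_injective h)
  set vm : Finset V → V := fun A =>
    if h : ∃ v, G.neighborSet v ∩ U = ↑A \ {v} then h.choose else Classical.arbitrary V
    with hvm
  have hvmspec : ∀ A ∈ D, G.neighborSet (vm A) ∩ U = ↑A \ {vm A} := by
    intro A hA
    have h := hex A hA
    simp only [hvm, dif_pos h]
    exact h.choose_spec
  set f : Finset V → Finset V := fun A => A.erase (vm A) with hf
  have hfcoe : ∀ A ∈ D, (↑(f A) : Set V) = G.neighborSet (vm A) ∩ U := by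
    intro A hA
    rw [hf]
    simp only [Finset.coe_erase]
    exact (hvmspec A hA).symm
  set F : Finset (Finset V) := D.image f with hF
  have hDsub : ∀ A ∈ D, A ⊆ Ut := by
    intro A hA
    rw [hD, Finset.mem_filter, Finset.mem_powerset] at hA
    exact hA.1
  -- each fiber has at most n elements
  have hfiber : ∀ B ∈ F, (D.filter (fun A => f A = B)).card ≤ n := by
    intro B _
    rw [← hUtcard]
    refine Finset.card_le_card_of_injOn
      (fun A => if vm A ∈ A then vm A else if h : A.Nonempty then h.choose else Classical.arbitrary V)
      ?_ ?_
    · intro A hA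
      rw [Finset.mem_coe, Finset.mem_filter] at hA
      have hAD := hA.1
      have hAsub := hDsub A hAD
      have hAne : A.Nonempty := by
        rw [hD, Finset.mem_filter] at hAD
        exact Finset.nonempty_of_ne_empty hAD.2.1
      by_cases hv : vm A ∈ A
      · simp only [hv, if_true]; exact hAsub hv
      · simp only [hv, if_false, dif_pos hAne]; exact hAsub hAne.choose_spec
    · intro A hA A' hA' heq
      simp only [Finset.coe_filter, Set.mem_setOf_eq] at hA hA'
      obtain ⟨hAD, hAB⟩ := hA
      obtain ⟨hA'D, hA'B⟩ := hA'
      have key : ∀ C, C ∈ D → f C = B → vm C ∉ C → C = B := by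
        intro C _ hCB hv
        rw [← hCB, hf]
        exact (Finset.erase_eq_of_notMem hv).symm
      have key2 : ∀ C, C ∈ D → f C = B → vm C ∈ C → C = insert (vm C) B := by
        intro C _ hCB hv
        rw [← hCB, hf]
        exact (Finset.insert_erase hv).symm
      by_cases hv : vm A ∈ A <;> by_cases hv' : vm A' ∈ A'
      · simp only [hv, hv', if_true] at heq
        rw [key2 A hAD hAB hv, key2 A' hA'D hA'B hv', heq]
      · -- vm A ∈ A, vm A' ∉ A' : then A' = B and g A' ∈ B, but g A = vm A ∉ B
        exfalso
        have hA'B' : A' = B := key A' hA'D hA'B hv'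
        have hvnotB : vm A ∉ B := by
          rw [← hAB, hf]; exact Finset.notMem_erase _ _
        have hA'ne : A'.Nonempty := by
          rw [hD, Finset.mem_filter] at hA'D
          exact Finset.nonempty_of_ne_empty hA'D.2.1
        simp only [hv, hv', if_true, if_false, dif_pos hA'ne] at heq
        exact hvnotB (by rw [heq, ← hA'B']; exact hA'ne.choose_spec)
      · exfalso
        have hAB' : A = B := key A hAD hAB hv
        have hvnotB : vm A' ∉ B := by
          rw [← hA'B, hf]; exact Finset.notMem_erase _ _
        have hAne : A.Nonempty := by
          rw [hD, Finset.mem_filter] at hAD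
          exact Finset.nonempty_of_ne_empty hAD.2.1
        simp only [hv, hv', if_true, if_false, dif_pos hAne] at heq
        exact hvnotB (by rw [← heq, ← hAB']; exact hAne.choose_spec)
      · rw [key A hAD hAB hv, key A' hA'D hA'B hv']
  -- |D| = 2^n - 2
  have hDcard : D.card = 2 ^ n - 2 := by
    have hUtne : Ut ≠ ∅ := by
      intro h
      rw [h] at hUtcard
      simp at hUtcard
      omega
    have : D = Ut.powerset \ {∅, Ut} := by
      ext A
      simp only [hD, Finset.mem_filter, Finset.mem_sdiff, Finset.mem_insert,
        Finset.mem_singleton, not_or]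
    rw [this, Finset.card_sdiff_of_subset]
    · rw [Finset.card_powerset, hUtcard]
      congr 1
      rw [Finset.card_insert_of_notMem (by simpa using (Ne.symm hUtne))]
      simp
    · intro A hA
      simp only [Finset.mem_insert, Finset.mem_singleton] at hA
      rcases hA with rfl | rfl <;> simp [Finset.empty_mem_powerset, Finset.mem_powerset_self]
  have hDF : D.card ≤ n * F.card := Finset.card_le_mul_card_image D n hfiber
  -- arithmetic : ∑ C(n,i) < |F|
  have h2n : 2 ≤ 2 ^ n := by
    calc 2 = 2 ^ 1 := by norm_num
    _ ≤ 2 ^ n := Nat.pow_le_pow_right (by norm_num) (by omega)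
  have hsumF : ∑ i ∈ Finset.range t, n.choose i < F.card := by
    have h1 : (∑ i ∈ Finset.range t, (n.choose i : ℝ)) * n < (2 : ℝ) ^ n - 2 := by
      rw [← lt_div_iff₀ (by exact_mod_cast hnpos)]
      exact ht
    have h2 : ((∑ i ∈ Finset.range t, n.choose i) * n : ℕ) < ((2 ^ n - 2 : ℕ) : ℝ) := by
      push_cast [Nat.cast_sub h2n]
      exact h1
    have h3 : (∑ i ∈ Finset.range t, n.choose i) * n < 2 ^ n - 2 := by exact_mod_cast h2
    have h4 : (∑ i ∈ Finset.range t, n.choose i) * n < n * F.card := by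
      omega
    rw [mul_comm] at h4
    exact lt_of_mul_lt_mul_left h4 (Nat.zero_le n)
  -- Sauer-Shelah : some set of size ≥ t is shattered by F
  have hSS : F.card ≤ F.shatterer.card := Finset.card_le_card_shatterer F
  have hFsub : ∀ u ∈ F, u ⊆ Ut := by
    intro u hu
    rw [hF, Finset.mem_image] at hu
    obtain ⟨A, hA, rfl⟩ := hu
    exact (Finset.erase_subset _ _).trans (hDsub A hA)
  have hexS : ∃ S ∈ F.shatterer, t ≤ S.card := by
    by_contra h
    push_neg at h
    have hsub : F.shatterer ⊆ (Finset.range t).biUnion (fun i => Ut.powersetCard i) := by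
      intro S hS
      have hSsh := Finset.mem_shatterer.mp hS
      obtain ⟨u, hu, hSu⟩ := hSsh.exists_superset
      have hSUt : S ⊆ Ut := hSu.trans (hFsub u hu)
      rw [Finset.mem_biUnion]
      exact ⟨S.card, Finset.mem_range.mpr (h S hS), Finset.mem_powersetCard.mpr ⟨hSUt, rfl⟩⟩
    have hcard := (Finset.card_le_card hsub).trans (Finset.card_biUnion_le)
    simp only [Finset.card_powersetCard, hUtcard] at hcard
    omega
  obtain ⟨S, hSsh, hSt⟩ := hexS
  obtain ⟨S', hS'S, hS'card⟩ := Finset.exists_subset_card_eq hSt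
  have hS'sh : F.Shatters S' := (Finset.mem_shatterer.mp hSsh).mono_right hS'S
  have hS'Ut : S' ⊆ Ut := by
    obtain ⟨u, hu, hSu⟩ := (Finset.mem_shatterer.mp hSsh).exists_superset
    exact hS'S.trans (hSu.trans (hFsub u hu))
  -- conclude
  have hmem : t ∈ {m | ∃ W : Set V, (∀ A ⊆ W, ∃ v, G.neighborSet v ∩ W = A) ∧ W.ncard = m} := by
    refine ⟨(S' : Set V), ?_, by simp [Set.ncard_coe_finset, hS'card]⟩
    intro A hA
    have hAfin : A.Finite := Set.toFinite A
    have hAt : hAfin.toFinset ⊆ S' := by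
      intro x hx
      rw [Set.Finite.mem_toFinset] at hx
      exact hA hx
    obtain ⟨u, hu, hSu⟩ := hS'sh hAt
    rw [hF, Finset.mem_image] at hu
    obtain ⟨A₀, hA₀, rfl⟩ := hu
    refine ⟨vm A₀, ?_⟩
    have hS'U : (S' : Set V) ⊆ U := by
      rw [← hUtcoe]; exact_mod_cast hS'Ut
    have : G.neighborSet (vm A₀) ∩ ↑S' = (G.neighborSet (vm A₀) ∩ U) ∩ ↑S' := by
      rw [Set.inter_assoc, Set.inter_eq_self_of_subset_right hS'U]
    rw [this, ← hfcoe A₀ hA₀, ← Finset.coe_inter, Finset.inter_comm, hSu]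
    exact hAfin.coe_toFinset
  exact le_csSup hbdd hmem
end

section
/- For every n ∈ ℕ and every graphon W (symmetric measurable function on the square of a probability space with values in [0,1]), the sum of the induced densities of the complete graph K_n and the empty graph on n vertices in W is at least binom(R(n,n), n)^{-1}, where R(n,n) is the diagonal Ramsey number. -/
open MeasureTheory
open Finset

/-- The diagonal Ramsey number `R(n,n)`: the least `N` such that every graph on `N`
vertices contains a clique or an independent set of size `n`. -/
noncomputable def ramsey (n : ℕ) : ℕ :=
  sInf {N | ∀ G : SimpleGraph (Fin N), ∃ s : Finset (Fin N), s.card = n ∧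
    ((∀ i ∈ s, ∀ j ∈ s, i ≠ j → G.Adj i j) ∨ (∀ i ∈ s, ∀ j ∈ s, ¬ G.Adj i j))}


lemma sum_powerset_disjoint {ι : Type*} [DecidableEq ι] {P Q : Finset ι} (hQP : Q ⊆ P)
    (f g : ι → ℝ) (h1 : ∀ i ∈ P, f i + g i = 1) :
    ∑ t ∈ P.powerset.filter (fun t => Disjoint t Q), (∏ i ∈ t, f i) * ∏ i ∈ P \ t, g i
      = ∏ i ∈ Q, g i := by
  have hfilter : P.powerset.filter (fun t => Disjoint t Q) = (P \ Q).powerset := by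
    ext t
    simp only [mem_filter, mem_powerset, Finset.subset_sdiff]
  rw [hfilter]
  have hterm : ∀ t ∈ (P \ Q).powerset, (∏ i ∈ t, f i) * ∏ i ∈ P \ t, g i
      = (∏ i ∈ Q, g i) * ((∏ i ∈ t, f i) * ∏ i ∈ (P \ Q) \ t, g i) := by
    intro t ht
    rw [mem_powerset] at ht
    have hsplit : P \ t = Q ∪ ((P \ Q) \ t) := by
      ext i
      simp only [Finset.mem_sdiff, Finset.mem_union]
      have h1 : i ∈ Q → i ∈ P := fun h => hQP h
      have h2 : i ∈ Q → i ∉ t := fun h h' => (Finset.mem_sdiff.mp (ht h')).2 h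
      tauto
    have hdisj : Disjoint Q ((P \ Q) \ t) := by
      refine Finset.disjoint_left.mpr fun i hi hi' => ?_
      exact (Finset.mem_sdiff.mp (Finset.mem_sdiff.mp hi').1).2 hi
    rw [hsplit, Finset.prod_union hdisj]
    ring
  rw [Finset.sum_congr rfl hterm, ← Finset.mul_sum, ← Finset.prod_add]
  have : ∏ i ∈ P \ Q, (f i + g i) = 1 :=
    Finset.prod_eq_one fun i hi => h1 i (Finset.sdiff_subset hi)
  rw [this, mul_one]

lemma sum_powerset_superset {ι : Type*} [DecidableEq ι] {P Q : Finset ι} (hQP : Q ⊆ P)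
    (f g : ι → ℝ) (h1 : ∀ i ∈ P, f i + g i = 1) :
    ∑ t ∈ P.powerset.filter (fun t => Q ⊆ t), (∏ i ∈ t, f i) * ∏ i ∈ P \ t, g i
      = ∏ i ∈ Q, f i := by
  rw [← sum_powerset_disjoint hQP g f (fun i hi => by rw [add_comm]; exact h1 i hi)]
  refine Finset.sum_nbij' (fun t => P \ t) (fun t => P \ t) ?_ ?_ ?_ ?_ ?_
  · intro t ht
    simp only [mem_filter, mem_powerset] at ht ⊢
    exact ⟨Finset.sdiff_subset, Finset.disjoint_left.mpr fun i hi hiQ =>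
      (Finset.mem_sdiff.mp hi).2 (ht.2 hiQ)⟩
  · intro t ht
    simp only [mem_filter, mem_powerset] at ht ⊢
    exact ⟨Finset.sdiff_subset, fun i hi => Finset.mem_sdiff.mpr
      ⟨hQP hi, Finset.disjoint_left.mp ht.2.symm hi⟩⟩
  · intro t ht
    simp only [mem_filter, mem_powerset] at ht
    exact Finset.sdiff_sdiff_eq_self ht.1
  · intro t ht
    simp only [mem_filter, mem_powerset] at ht
    exact Finset.sdiff_sdiff_eq_self ht.1
  · intro t ht
    simp only [mem_filter, mem_powerset] at ht
    rw [Finset.sdiff_sdiff_eq_self ht.1]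
    ring


lemma sum_biUnion_le_nonneg {ι κ : Type*} [DecidableEq κ] (s : Finset ι) (B : ι → Finset κ)
    (w : κ → ℝ) (hw : ∀ k, 0 ≤ w k) :
    ∑ k ∈ s.biUnion B, w k ≤ ∑ i ∈ s, ∑ k ∈ B i, w k := by
  classical
  induction s using Finset.induction_on with
  | empty => simp
  | insert _ _ hx ih =>
    rename_i a s
    rw [Finset.biUnion_insert, Finset.sum_insert hx]
    calc ∑ k ∈ B a ∪ s.biUnion B, w k
        ≤ ∑ k ∈ B a, w k + ∑ k ∈ s.biUnion B, w k := by
          have := Finset.sum_union_inter (s₁ := B a) (s₂ := s.biUnion B) (f := w)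
          have h2 : 0 ≤ ∑ k ∈ B a ∩ s.biUnion B, w k := Finset.sum_nonneg fun k _ => hw k
          linarith
      _ ≤ _ := by linarith [ih]

lemma pointwise_cover {N n : ℕ}
    (hN : ∀ G : SimpleGraph (Fin N), ∃ s : Finset (Fin N), s.card = n ∧
      ((∀ i ∈ s, ∀ j ∈ s, i ≠ j → G.Adj i j) ∨ (∀ i ∈ s, ∀ j ∈ s, ¬ G.Adj i j)))
    (f g : Fin N × Fin N → ℝ) (h1 : ∀ p, f p + g p = 1) (hf : ∀ p, 0 ≤ f p)
    (hg : ∀ p, 0 ≤ g p) :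
    (1:ℝ) ≤ ∑ s ∈ (univ : Finset (Fin N)).powersetCard n,
      ((∏ p ∈ (univ.filter fun p : Fin N × Fin N => p.1 < p.2).filter
          (fun p => p.1 ∈ s ∧ p.2 ∈ s), f p)
       + ∏ p ∈ (univ.filter fun p : Fin N × Fin N => p.1 < p.2).filter
          (fun p => p.1 ∈ s ∧ p.2 ∈ s), g p) := by
  classical
  set P : Finset (Fin N × Fin N) := univ.filter (fun p => p.1 < p.2) with hP
  set Q : Finset (Fin N) → Finset (Fin N × Fin N) :=
    fun s => P.filter (fun p => p.1 ∈ s ∧ p.2 ∈ s) with hQ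
  set w : Finset (Fin N × Fin N) → ℝ := fun t => (∏ p ∈ t, f p) * ∏ p ∈ P \ t, g p with hw
  have hw0 : ∀ t, 0 ≤ w t := fun t =>
    mul_nonneg (prod_nonneg fun p _ => hf p) (prod_nonneg fun p _ => hg p)
  have h1' : (1:ℝ) = ∑ t ∈ P.powerset, w t := by
    rw [← Finset.prod_add]
    exact (Finset.prod_eq_one fun p _ => h1 p).symm
  have cover : ∀ t ∈ P.powerset, ∃ s ∈ (univ : Finset (Fin N)).powersetCard n,
      Q s ⊆ t ∨ Disjoint t (Q s) := by
    intro t ht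
    rw [mem_powerset] at ht
    obtain ⟨s, hcard, hmono⟩ := hN (SimpleGraph.fromRel (fun i j => (i,j) ∈ t))
    refine ⟨s, Finset.mem_powersetCard_univ.mpr hcard, ?_⟩
    rcases hmono with hcl | hind
    · left
      intro p hp
      simp only [hQ, hP, mem_filter, mem_univ, true_and] at hp
      obtain ⟨hlt, h1s, h2s⟩ := hp
      have hadj := hcl p.1 h1s p.2 h2s (ne_of_lt hlt)
      rw [SimpleGraph.fromRel_adj] at hadj
      rcases hadj.2 with h | h
      · simpa using h
      · exfalso
        have := ht h
        simp only [hP, mem_filter, mem_univ, true_and] at this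
        exact absurd (lt_trans hlt this) (lt_irrefl _)
    · right
      refine Finset.disjoint_left.mpr fun p hpt hpQ => ?_
      simp only [hQ, hP, mem_filter, mem_univ, true_and] at hpQ
      obtain ⟨hlt, h1s, h2s⟩ := hpQ
      refine hind p.1 h1s p.2 h2s ?_
      rw [SimpleGraph.fromRel_adj]
      exact ⟨ne_of_lt hlt, Or.inl (by simpa using hpt)⟩
  have subset_cover : P.powerset ⊆ ((univ : Finset (Fin N)).powersetCard n).biUnion
      (fun s => P.powerset.filter (fun t => Q s ⊆ t)
        ∪ P.powerset.filter (fun t => Disjoint t (Q s))) := by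
    intro t ht
    obtain ⟨s, hs, hcase⟩ := cover t ht
    rw [Finset.mem_biUnion]
    refine ⟨s, hs, ?_⟩
    rcases hcase with h | h
    · exact Finset.mem_union_left _ (mem_filter.mpr ⟨ht, h⟩)
    · exact Finset.mem_union_right _ (mem_filter.mpr ⟨ht, h⟩)
  calc (1:ℝ) = ∑ t ∈ P.powerset, w t := h1'
    _ ≤ ∑ t ∈ ((univ : Finset (Fin N)).powersetCard n).biUnion
          (fun s => P.powerset.filter (fun t => Q s ⊆ t)
            ∪ P.powerset.filter (fun t => Disjoint t (Q s))), w t :=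
        Finset.sum_le_sum_of_subset_of_nonneg subset_cover (fun t _ _ => hw0 t)
    _ ≤ ∑ s ∈ (univ : Finset (Fin N)).powersetCard n,
          ∑ t ∈ P.powerset.filter (fun t => Q s ⊆ t)
            ∪ P.powerset.filter (fun t => Disjoint t (Q s)), w t :=
        sum_biUnion_le_nonneg _ _ _ hw0
    _ ≤ _ := by
        refine Finset.sum_le_sum fun s hs => ?_
        have hQsP : Q s ⊆ P := Finset.filter_subset _ _
        have hA := sum_powerset_superset hQsP f g (fun i _ => h1 i)
        have hB := sum_powerset_disjoint hQsP f g (fun i _ => h1 i)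
        have hI : 0 ≤ ∑ t ∈ P.powerset.filter (fun t => Q s ⊆ t)
            ∩ P.powerset.filter (fun t => Disjoint t (Q s)), w t :=
          Finset.sum_nonneg fun t _ => hw0 t
        have := Finset.sum_union_inter
          (s₁ := P.powerset.filter (fun t => Q s ⊆ t))
          (s₂ := P.powerset.filter (fun t => Disjoint t (Q s))) (f := w)
        simp only [hw] at hA hB this ⊢
        linarith


lemma measurePreserving_comp_inj {ι ι' : Type*} [Fintype ι] [Fintype ι']
    {Ω : Type} [MeasurableSpace Ω] (μ : Measure Ω) [IsProbabilityMeasure μ]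
    {g : ι' → ι} (hg : Function.Injective g) :
    MeasurePreserving (fun x : ι → Ω => x ∘ g)
      (Measure.pi fun _ : ι => μ) (Measure.pi fun _ : ι' => μ) := by
  classical
  set p : ι → Prop := fun i => i ∈ Set.range g with hp
  letI : Fintype (Subtype p) := Subtype.fintype p
  set e2 : ι' ≃ Subtype p := Equiv.ofInjective g hg with he2
  have h1 := measurePreserving_piEquivPiSubtypeProd (fun _ : ι => μ) p
  have h2 : MeasurePreserving
      (Prod.fst : ((Subtype p → Ω) × ({i // ¬ p i} → Ω)) → (Subtype p → Ω))
      ((Measure.pi fun _ : Subtype p => μ).prod (Measure.pi fun _ : {i // ¬ p i} => μ))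
      (Measure.pi fun _ : Subtype p => μ) :=
    ⟨measurable_fst, by simp [Measure.map_fst_prod]⟩
  have h3 := (measurePreserving_piCongrLeft (fun _ : Subtype p => μ) e2).symm
    (MeasurableEquiv.piCongrLeft (fun _ : Subtype p => Ω) e2)
  have hcomp := (h3.comp h2).comp h1
  have heq : (fun x : ι → Ω => x ∘ g) = (⇑(MeasurableEquiv.piCongrLeft (fun _ : Subtype p => Ω) e2).symm ∘ Prod.fst) ∘ ⇑(MeasurableEquiv.piEquivPiSubtypeProd (fun _ : ι => Ω) p) := by
    funext x
    funext i'
    simp [MeasurableEquiv.piEquivPiSubtypeProd, MeasurableEquiv.piCongrLeft,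
      Equiv.piCongrLeft, Function.comp, he2]
    rfl
  rw [heq]
  exact hcomp

lemma integral_prod_pairs {N n : ℕ} {Ω : Type} [MeasurableSpace Ω] (μ : Measure Ω)
    [IsProbabilityMeasure μ] (F : Ω → Ω → ℝ) (hF : Measurable (Function.uncurry F))
    (s : Finset (Fin N)) (hs : s.card = n) :
    ∫ x : Fin N → Ω, ∏ p ∈ (univ.filter fun p : Fin N × Fin N => p.1 < p.2).filter
        (fun p => p.1 ∈ s ∧ p.2 ∈ s), F (x p.1) (x p.2) ∂(Measure.pi fun _ => μ)
    = ∫ y : Fin n → Ω, ∏ q ∈ univ.filter (fun q : Fin n × Fin n => q.1 < q.2),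
        F (y q.1) (y q.2) ∂(Measure.pi fun _ => μ) := by
  classical
  set e := s.orderIsoOfFin hs with he
  set g : Fin n → Fin N := fun i => (e i : Fin N) with hg
  have hginj : Function.Injective g := fun a b hab => e.injective (Subtype.ext hab)
  have MP := measurePreserving_comp_inj μ hginj
  have hmeasFn : Measurable (fun y : Fin n → Ω =>
      ∏ q ∈ univ.filter (fun q : Fin n × Fin n => q.1 < q.2), F (y q.1) (y q.2)) :=
    Finset.measurable_prod _ fun q _ => by
      have : (fun y : Fin n → Ω => F (y q.1) (y q.2))
          = Function.uncurry F ∘ (fun y => (y q.1, y q.2)) := rfl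
      rw [this]
      exact hF.comp ((measurable_pi_apply q.1).prodMk (measurable_pi_apply q.2))
  rw [← MP.map_eq, integral_map MP.measurable.aemeasurable hmeasFn.aestronglyMeasurable]
  refine integral_congr_ae (Filter.Eventually.of_forall fun x => ?_)
  show ∏ p ∈ (univ.filter fun p : Fin N × Fin N => p.1 < p.2).filter
        (fun p => p.1 ∈ s ∧ p.2 ∈ s), F (x p.1) (x p.2)
    = ∏ q ∈ univ.filter (fun q : Fin n × Fin n => q.1 < q.2), F ((x ∘ g) q.1) ((x ∘ g) q.2)
  refine (Finset.prod_bij (fun q (_ : q ∈ univ.filter (fun q : Fin n × Fin n => q.1 < q.2)) =>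
      (g q.1, g q.2)) ?_ ?_ ?_ ?_).symm
  · intro q hq
    simp only [mem_filter, mem_univ, true_and] at hq ⊢
    refine ⟨?_, (e q.1).2, (e q.2).2⟩
    exact Subtype.coe_lt_coe.mpr (e.lt_iff_lt.mpr hq)
  · intro a ha b hb hab
    have h1 := congrArg Prod.fst hab
    have h2 := congrArg Prod.snd hab
    exact Prod.ext (hginj h1) (hginj h2)
  · intro p hp
    simp only [mem_filter, mem_univ, true_and] at hp
    obtain ⟨hlt, hp1, hp2⟩ := hp
    refine ⟨(e.symm ⟨p.1, hp1⟩, e.symm ⟨p.2, hp2⟩), ?_, ?_⟩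
    · simp only [mem_filter, mem_univ, true_and]
      exact e.symm.lt_iff_lt.mpr (Subtype.mk_lt_mk.mpr hlt)
    · have h1 : g (e.symm ⟨p.1, hp1⟩) = p.1 := by
        simp [hg]
      have h2 : g (e.symm ⟨p.2, hp2⟩) = p.2 := by
        simp [hg]
      simp [h1, h2]
  · intro q hq
    rfl


/-- for every graphon `W`, the densities of the clique and the empty
graph on `n` vertices sum to at least `C(R(n,n), n)⁻¹`. -/
theorem stmt16 {Ω : Type} [MeasurableSpace Ω] (μ : Measure Ω) [IsProbabilityMeasure μ]
    (W : Ω → Ω → ℝ) (hsymm : ∀ x y, W x y = W y x)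
    (hmeas : Measurable (Function.uncurry W))
    (hrange : ∀ x y, W x y ∈ Set.Icc (0 : ℝ) 1) (n : ℕ) :
    (1 : ℝ) / ((ramsey n).choose n) ≤
      (∫ x : Fin n → Ω,
        ∏ p ∈ Finset.univ.filter (fun p : Fin n × Fin n => p.1 < p.2),
          W (x p.1) (x p.2) ∂(Measure.pi fun _ => μ)) +
      (∫ x : Fin n → Ω,
        ∏ p ∈ Finset.univ.filter (fun p : Fin n × Fin n => p.1 < p.2),
          (1 - W (x p.1) (x p.2)) ∂(Measure.pi fun _ => μ)) := by
  classical
  by_cases hne : {N | ∀ G : SimpleGraph (Fin N), ∃ s : Finset (Fin N), s.card = n ∧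
      ((∀ i ∈ s, ∀ j ∈ s, i ≠ j → G.Adj i j) ∨ (∀ i ∈ s, ∀ j ∈ s, ¬ G.Adj i j))}.Nonempty
  case neg =>
    have hn : n ≠ 0 := by
      intro h
      subst h
      exact hne ⟨0, fun G => ⟨∅, by simp⟩⟩
    have h0 : ramsey n = 0 := by
      rw [ramsey, Set.not_nonempty_iff_eq_empty.mp hne, Nat.sInf_empty]
    rw [h0, Nat.choose_eq_zero_of_lt (Nat.pos_of_ne_zero hn)]
    simp only [Nat.cast_zero, div_zero]
    exact add_nonneg
      (integral_nonneg fun x => Finset.prod_nonneg fun p _ => (hrange _ _).1)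
      (integral_nonneg fun x => Finset.prod_nonneg fun p _ => sub_nonneg.mpr (hrange _ _).2)
  case pos =>
    have hmem := Nat.sInf_mem hne
    set N := ramsey n with hNdef
    obtain ⟨s₀, hs₀, -⟩ := hmem (⊥ : SimpleGraph (Fin N))
    have hnN : n ≤ N := by
      calc n = s₀.card := hs₀.symm
        _ ≤ (univ : Finset (Fin N)).card := Finset.card_le_univ s₀
        _ = N := by simp
    have hchoose : (0:ℝ) < (N.choose n : ℝ) := by exact_mod_cast Nat.choose_pos hnN
    set π : Measure (Fin N → Ω) := Measure.pi fun _ => μ with hπ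
    set A : Finset (Fin N) → (Fin N → Ω) → ℝ := fun s x =>
      ∏ p ∈ (univ.filter fun p : Fin N × Fin N => p.1 < p.2).filter
        (fun p => p.1 ∈ s ∧ p.2 ∈ s), W (x p.1) (x p.2) with hA
    set B : Finset (Fin N) → (Fin N → Ω) → ℝ := fun s x =>
      ∏ p ∈ (univ.filter fun p : Fin N × Fin N => p.1 < p.2).filter
        (fun p => p.1 ∈ s ∧ p.2 ∈ s), (1 - W (x p.1) (x p.2)) with hB
    have hmeas' : Measurable (Function.uncurry fun a b => 1 - W a b) := by
      have : (Function.uncurry fun a b => 1 - W a b)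
          = fun p => 1 - Function.uncurry W p := rfl
      rw [this]
      exact measurable_const.sub hmeas
    have measA : ∀ s, Measurable (A s) := by
      intro s
      refine Finset.measurable_prod _ fun p _ => ?_
      have : (fun x : Fin N → Ω => W (x p.1) (x p.2))
          = Function.uncurry W ∘ (fun x => (x p.1, x p.2)) := rfl
      rw [this]
      exact hmeas.comp ((measurable_pi_apply p.1).prodMk (measurable_pi_apply p.2))
    have measB : ∀ s, Measurable (B s) := by
      intro s
      refine Finset.measurable_prod _ fun p _ => ?_
      have : (fun x : Fin N → Ω => 1 - W (x p.1) (x p.2))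
          = (Function.uncurry fun a b => 1 - W a b) ∘ (fun x => (x p.1, x p.2)) := rfl
      rw [this]
      exact hmeas'.comp ((measurable_pi_apply p.1).prodMk (measurable_pi_apply p.2))
    have intA : ∀ s, Integrable (A s) π := by
      intro s
      refine (integrable_const (1:ℝ)).mono' (measA s).aestronglyMeasurable
        (Filter.Eventually.of_forall fun x => ?_)
      rw [Real.norm_eq_abs, abs_of_nonneg (Finset.prod_nonneg fun p _ => (hrange _ _).1)]
      exact Finset.prod_le_one (fun p _ => (hrange _ _).1) (fun p _ => (hrange _ _).2)
    have intB : ∀ s, Integrable (B s) π := by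
      intro s
      refine (integrable_const (1:ℝ)).mono' (measB s).aestronglyMeasurable
        (Filter.Eventually.of_forall fun x => ?_)
      rw [Real.norm_eq_abs, abs_of_nonneg
        (Finset.prod_nonneg fun p _ => sub_nonneg.mpr (hrange _ _).2)]
      exact Finset.prod_le_one (fun p _ => sub_nonneg.mpr (hrange _ _).2)
        (fun p _ => by linarith [(hrange (x p.1) (x p.2)).1])
    have hpt : ∀ x : Fin N → Ω, (1:ℝ) ≤ ∑ s ∈ (univ : Finset (Fin N)).powersetCard n,
        (A s x + B s x) := by
      intro x
      exact pointwise_cover hmem (fun p => W (x p.1) (x p.2))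
        (fun p => 1 - W (x p.1) (x p.2))
        (fun p => by ring) (fun p => (hrange _ _).1)
        (fun p => sub_nonneg.mpr (hrange _ _).2)
    have hint : ∀ s ∈ (univ : Finset (Fin N)).powersetCard n,
        Integrable (fun x => A s x + B s x) π := fun s _ => (intA s).add (intB s)
    have h2 : (1:ℝ) ≤ ∫ x, ∑ s ∈ (univ : Finset (Fin N)).powersetCard n,
        (A s x + B s x) ∂π := by
      have := integral_mono (μ := π) (integrable_const 1)
        (integrable_finset_sum _ hint) hpt
      simpa using this
    rw [integral_finset_sum _ hint] at h2
    have h3 : ∀ s ∈ (univ : Finset (Fin N)).powersetCard n,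
        ∫ x, (A s x + B s x) ∂π =
        (∫ x : Fin n → Ω,
          ∏ p ∈ Finset.univ.filter (fun p : Fin n × Fin n => p.1 < p.2),
            W (x p.1) (x p.2) ∂(Measure.pi fun _ => μ)) +
        (∫ x : Fin n → Ω,
          ∏ p ∈ Finset.univ.filter (fun p : Fin n × Fin n => p.1 < p.2),
            (1 - W (x p.1) (x p.2)) ∂(Measure.pi fun _ => μ)) := by
      intro s hs
      rw [integral_add (intA s) (intB s)]
      congr 1
      · exact integral_prod_pairs μ W hmeas s (Finset.mem_powersetCard_univ.mp hs)
      · exact integral_prod_pairs μ (fun a b => 1 - W a b) hmeas' s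
          (Finset.mem_powersetCard_univ.mp hs)
    rw [Finset.sum_congr rfl h3, Finset.sum_const, Finset.card_powersetCard,
      Finset.card_univ, Fintype.card_fin, nsmul_eq_mul] at h2
    rw [div_le_iff₀ hchoose]
    linarith
end

section
/- For odd n ≥ 9, let G'_n be the graph on vertex set {1,...,n} ∪ {a,b} with edges {i,i+1} for 1 ≤ i ≤ n−1, edges {a,4} and {b,n−3}, and edges {2i,2j} for all distinct i,j ∈ {1,...,(n−1)/2}. Then for all odd 9 ≤ n < m, G'_n is not isomorphic to an induced subgraph of G'_m; i.e., {G'_n : n ≥ 9 odd} is an infinite antichain in the induced-subgraph partial order. -/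
/-- The graph `G'_n` (for odd `n ≥ 9`): the path on `1, …, n` (here `Fin n`, 0-based)
with the even-labeled (1-based) vertices joined into a clique, plus two vertices `a, b`
(here `Fin 2`) with `a` adjacent to vertex `4` and `b` adjacent to vertex `n-3`
(paper's 1-based labels). -/
def G' (n : ℕ) : SimpleGraph (Fin n ⊕ Fin 2) :=
  SimpleGraph.fromRel fun x y =>
    match x, y with
    | Sum.inl i, Sum.inl j =>
        ((i : ℕ) + 1 = (j : ℕ)) ∨ ((i : ℕ) % 2 = 1 ∧ (j : ℕ) % 2 = 1)
    | Sum.inr a, Sum.inl i => (a = 0 ∧ (i : ℕ) = 3) ∨ (a = 1 ∧ (i : ℕ) = n - 4)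
    | _, _ => False

lemma G'_adj_inl_inl {k : ℕ} {i j : Fin k} :
    (G' k).Adj (Sum.inl i) (Sum.inl j) ↔
      (i:ℕ) ≠ j ∧ (((i:ℕ)+1 = j ∨ (j:ℕ)+1 = i) ∨ ((i:ℕ)%2 = 1 ∧ (j:ℕ)%2 = 1)) := by
  rw [G', SimpleGraph.fromRel_adj]
  simp only [ne_eq, Sum.inl.injEq, Fin.ext_iff]
  tauto

lemma G'_adj_inr_inl {k} {a : Fin 2} {i : Fin k} :
    (G' k).Adj (Sum.inr a) (Sum.inl i) ↔
      ((a = 0 ∧ (i:ℕ) = 3) ∨ (a = 1 ∧ (i:ℕ) = k - 4)) := by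
  rw [G', SimpleGraph.fromRel_adj]; simp

lemma G'_not_adj_inr_inr {k} {a b : Fin 2} : ¬ (G' k).Adj (Sum.inr a) (Sum.inr b) := by
  rw [G', SimpleGraph.fromRel_adj]; simp

/-- An even vertex only has its path neighbours. -/
lemma G'_nbr_even {k : ℕ} (hk9 : 9 ≤ k) (hk2 : k % 2 = 1) {j : Fin k}
    (hj : (j:ℕ) % 2 = 0) {y} (h : (G' k).Adj (Sum.inl j) y) :
    ∃ j' : Fin k, y = Sum.inl j' ∧ ((j':ℕ)+1 = j ∨ (j:ℕ)+1 = j') := by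
  cases y with
  | inl j' =>
      rw [G'_adj_inl_inl] at h
      exact ⟨j', rfl, by omega⟩
  | inr a =>
      exfalso
      have := G'_adj_inr_inl.mp h.symm
      omega

/-- A pendant vertex only has its attachment neighbour. -/
lemma G'_nbr_inr {k : ℕ} {a : Fin 2} {y} (h : (G' k).Adj (Sum.inr a) y) :
    ∃ j : Fin k, y = Sum.inl j ∧ ((a = 0 ∧ (j:ℕ) = 3) ∨ (a = 1 ∧ (j:ℕ) = k - 4)) := by
  cases y with
  | inl j => exact ⟨j, rfl, G'_adj_inr_inl.mp h⟩
  | inr b => exact absurd h G'_not_adj_inr_inr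

def Vv (n : ℕ) (hn : 0 < n) (t : ℕ) : Fin n ⊕ Fin 2 := Sum.inl ⟨t % n, Nat.mod_lt _ hn⟩

/-- the graphs `G'_n`, `n ≥ 9` odd, form an infinite antichain in the
induced-subgraph order. -/
theorem stmt18 (n m : ℕ) (hn : 9 ≤ n) (hno : Odd n) (hmo : Odd m) (hm : n < m) :
    ¬ Nonempty (G' n ↪g G' m) := by
  rintro ⟨f⟩
  have hn2 : n % 2 = 1 := Nat.odd_iff.mp hno
  have hm2 : m % 2 = 1 := Nat.odd_iff.mp hmo
  have hm9 : 9 ≤ m := by omega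
  have hn0 : 0 < n := by omega
  set V : ℕ → Fin n ⊕ Fin 2 := Vv n hn0 with hV
  have hfinj : ∀ s t, s < n → t < n → f (V s) = f (V t) → s = t := by
    intro s t hs ht h
    have := f.injective h
    simpa [hV, Vv, Fin.ext_iff, Nat.mod_eq_of_lt hs, Nat.mod_eq_of_lt ht] using this
  have adjV : ∀ s t : ℕ, s < n → t < n →
      ((G' n).Adj (V s) (V t) ↔
        (s ≠ t ∧ ((s+1 = t ∨ t+1 = s) ∨ (s % 2 = 1 ∧ t % 2 = 1)))) := by
    intro s t hs ht
    rw [hV]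
    show (G' n).Adj (Sum.inl _) (Sum.inl _) ↔ _
    rw [G'_adj_inl_inl]
    simp [Nat.mod_eq_of_lt hs, Nat.mod_eq_of_lt ht]
  have adjVr : ∀ (a : Fin 2) (t : ℕ), t < n →
      ((G' n).Adj (Sum.inr a) (V t) ↔ ((a = 0 ∧ t = 3) ∨ (a = 1 ∧ t = n-4))) := by
    intro a t ht
    rw [hV]
    show (G' n).Adj _ (Sum.inl _) ↔ _
    rw [G'_adj_inr_inl]
    simp [Nat.mod_eq_of_lt ht]
  -- Step 1: odd path vertices map to odd (clique) path vertices.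
  have himgodd : ∀ t, t < n → t % 2 = 1 → ∃ j : Fin m, f (V t) = Sum.inl j ∧ (j:ℕ) % 2 = 1 := by
    intro t ht hto
    obtain ⟨o₁, o₂, o₃, h1n, h2n, h3n, h1o, h2o, h3o, h1t, h2t, h3t, h12, h13, h23⟩ :
        ∃ o₁ o₂ o₃ : ℕ, o₁ < n ∧ o₂ < n ∧ o₃ < n ∧
        o₁ % 2 = 1 ∧ o₂ % 2 = 1 ∧ o₃ % 2 = 1 ∧ o₁ ≠ t ∧ o₂ ≠ t ∧ o₃ ≠ t ∧
        o₁ ≠ o₂ ∧ o₁ ≠ o₃ ∧ o₂ ≠ o₃ := by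
      refine ⟨if t = 1 then 7 else 1, if t = 3 then 7 else 3, if t = 5 then 7 else 5,
        ?_, ?_, ?_, ?_, ?_, ?_, ?_, ?_, ?_, ?_, ?_, ?_⟩ <;> (split_ifs <;> omega)
    have a₁ : (G' m).Adj (f (V t)) (f (V o₁)) :=
      f.map_rel_iff.mpr ((adjV t o₁ ht h1n).mpr ⟨by omega, by omega⟩)
    have a₂ : (G' m).Adj (f (V t)) (f (V o₂)) :=
      f.map_rel_iff.mpr ((adjV t o₂ ht h2n).mpr ⟨by omega, by omega⟩)
    have a₃ : (G' m).Adj (f (V t)) (f (V o₃)) :=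
      f.map_rel_iff.mpr ((adjV t o₃ ht h3n).mpr ⟨by omega, by omega⟩)
    cases hft : f (V t) with
    | inr a =>
        rw [hft] at a₁ a₂
        obtain ⟨j₁, hy₁, hc₁⟩ := G'_nbr_inr a₁
        obtain ⟨j₂, hy₂, hc₂⟩ := G'_nbr_inr a₂
        exfalso
        have hvv : (j₁:ℕ) = j₂ := by
          rcases hc₁ with ⟨ha, h⟩ | ⟨ha, h⟩ <;> rcases hc₂ with ⟨ha', h'⟩ | ⟨ha', h'⟩ <;>
            first
              | omega
              | exact absurd (ha.symm.trans ha') (by decide)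
        have : f (V o₁) = f (V o₂) := by rw [hy₁, hy₂, Fin.ext hvv]
        exact h12 (hfinj _ _ h1n h2n this)
    | inl j =>
        by_cases hj : (j:ℕ) % 2 = 1
        · exact ⟨j, rfl, hj⟩
        · exfalso
          rw [hft] at a₁ a₂ a₃
          have hj0 : (j:ℕ) % 2 = 0 := by omega
          obtain ⟨j₁, hy₁, hc₁⟩ := G'_nbr_even hm9 hm2 hj0 a₁
          obtain ⟨j₂, hy₂, hc₂⟩ := G'_nbr_even hm9 hm2 hj0 a₂
          obtain ⟨j₃, hy₃, hc₃⟩ := G'_nbr_even hm9 hm2 hj0 a₃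
          have d12 : (j₁:ℕ) ≠ j₂ := fun h =>
            h12 (hfinj _ _ h1n h2n (by rw [hy₁, hy₂, Fin.ext h]))
          have d13 : (j₁:ℕ) ≠ j₃ := fun h =>
            h13 (hfinj _ _ h1n h3n (by rw [hy₁, hy₃, Fin.ext h]))
          have d23 : (j₂:ℕ) ≠ j₃ := fun h =>
            h23 (hfinj _ _ h2n h3n (by rw [hy₂, hy₃, Fin.ext h]))
          omega
  -- Step 2: two odd vertices around an even internal vertex map at distance exactly 2.
  have hstep : ∀ i, 2 ≤ i → i ≤ n-3 → i % 2 = 0 →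
      ∀ (j₁ j₂ : Fin m), f (V (i-1)) = Sum.inl j₁ → f (V (i+1)) = Sum.inl j₂ →
      ((j₁:ℕ)+2 = j₂ ∨ (j₂:ℕ)+2 = j₁) := by
    intro i hi2 hi3 hie j₁ j₂ hj₁ hj₂
    have hin : i < n := by omega
    have hi1n : i - 1 < n := by omega
    have hi1n' : i + 1 < n := by omega
    have a₁ : (G' m).Adj (f (V i)) (f (V (i-1))) :=
      f.map_rel_iff.mpr ((adjV i (i-1) hin hi1n).mpr ⟨by omega, by omega⟩)
    have a₂ : (G' m).Adj (f (V i)) (f (V (i+1))) :=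
      f.map_rel_iff.mpr ((adjV i (i+1) hin hi1n').mpr ⟨by omega, by omega⟩)
    have hne12 : (j₁:ℕ) ≠ j₂ := fun h => by
      have : f (V (i-1)) = f (V (i+1)) := by rw [hj₁, hj₂, Fin.ext h]
      have := hfinj _ _ hi1n hi1n' this
      omega
    cases hfi : f (V i) with
    | inr a =>
        exfalso
        rw [hfi] at a₁ a₂
        obtain ⟨j₁', e₁, c₁⟩ := G'_nbr_inr a₁
        obtain ⟨j₂', e₂, c₂⟩ := G'_nbr_inr a₂
        rw [hj₁] at e₁
        rw [hj₂] at e₂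
        have e₁' : j₁ = j₁' := Sum.inl_injective e₁
        have e₂' : j₂ = j₂' := Sum.inl_injective e₂
        subst e₁'
        subst e₂'
        rcases c₁ with ⟨ha, h⟩ | ⟨ha, h⟩ <;> rcases c₂ with ⟨ha', h'⟩ | ⟨ha', h'⟩ <;>
          first
            | omega
            | exact absurd (ha.symm.trans ha') (by decide)
    | inl j =>
        rw [hfi] at a₁ a₂
        by_cases hj : (j:ℕ) % 2 = 1
        · exfalso
          have hon : (if i = 2 then 5 else 1) < n ∧ (if i = 2 then 5 else 1) % 2 = 1 ∧
              (if i = 2 then 5 else 1) ≠ i - 1 ∧ (if i = 2 then 5 else 1) ≠ i + 1 ∧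
              (if i = 2 then 5 else 1) ≠ i := by split_ifs <;> omega
          set o := if i = 2 then 5 else 1 with ho
          obtain ⟨hon1, hon2, hon3, hon4, hon5⟩ := hon
          obtain ⟨q, hq, hqo⟩ := himgodd o hon1 hon2
          have hqj : (j:ℕ) ≠ q := fun h => by
            have : f (V i) = f (V o) := by rw [hfi, hq, Fin.ext h]
            exact hon5 (hfinj _ _ hin hon1 this).symm
          have hadj : (G' m).Adj (f (V i)) (f (V o)) := by
            rw [hfi, hq]
            exact G'_adj_inl_inl.mpr ⟨hqj, Or.inr ⟨hj, hqo⟩⟩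
          have := (adjV i o hin hon1).mp (f.map_rel_iff.mp hadj)
          omega
        · have hj0 : (j:ℕ) % 2 = 0 := by omega
          obtain ⟨j₁', e₁, c₁⟩ := G'_nbr_even hm9 hm2 hj0 a₁
          obtain ⟨j₂', e₂, c₂⟩ := G'_nbr_even hm9 hm2 hj0 a₂
          rw [hj₁] at e₁
          rw [hj₂] at e₂
          have e₁' : j₁ = j₁' := Sum.inl_injective e₁
          have e₂' : j₂ = j₂' := Sum.inl_injective e₂
          subst e₁'
          subst e₂'
          omega
  -- Step 3: images of the attachment vertices 3 and n-4 sit at position 3 or m-4.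
  have hpend : ∀ (a : Fin 2) (t : ℕ), 3 ≤ t → t ≤ n-4 → t % 2 = 1 →
      ((a = 0 ∧ t = 3) ∨ (a = 1 ∧ t = n-4)) →
      ∀ j : Fin m, f (V t) = Sum.inl j → ((j:ℕ) = 3 ∨ (j:ℕ) = m-4) := by
    intro a t ht3 ht4 hto hat j hj
    have htn : t < n := by omega
    have h2n : t - 2 < n := by omega
    have h2n' : t + 2 < n := by omega
    obtain ⟨j₁, hj₁, hj₁o⟩ := himgodd (t-2) h2n (by omega)
    obtain ⟨j₂, hj₂, hj₂o⟩ := himgodd (t+2) h2n' (by omega)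
    have s₁ := hstep (t-1) (by omega) (by omega) (by omega) j₁ j
      (by rw [show t-1-1 = t-2 by omega]; exact hj₁)
      (by rw [show t-1+1 = t by omega]; exact hj)
    have s₂ := hstep (t+1) (by omega) (by omega) (by omega) j j₂
      (by rw [show t+1-1 = t by omega]; exact hj)
      (by rw [show t+1+1 = t+2 by omega]; exact hj₂)
    have hne : (j₁:ℕ) ≠ j₂ := fun h => by
      have : f (V (t-2)) = f (V (t+2)) := by rw [hj₁, hj₂, Fin.ext h]
      have := hfinj _ _ h2n h2n' this
      omega
    have aw : (G' m).Adj (f (Sum.inr a)) (f (V t)) :=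
      f.map_rel_iff.mpr ((adjVr a t htn).mpr hat)
    have hnadj : ∀ s, s < n → s ≠ t → ¬ (G' m).Adj (f (Sum.inr a)) (f (V s)) := by
      intro s hsn hst h
      have hs := (adjVr a s hsn).mp (f.map_rel_iff.mp h)
      rcases hat with ⟨ha, h'⟩ | ⟨ha, h'⟩ <;> rcases hs with ⟨ha', h''⟩ | ⟨ha', h''⟩ <;>
        first
          | omega
          | exact absurd (ha.symm.trans ha') (by decide)
    cases hw : f (Sum.inr a) with
    | inr b =>
        rw [hw, hj] at aw
        rcases G'_adj_inr_inl.mp aw with ⟨_, h⟩ | ⟨_, h⟩ <;> omega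
    | inl q =>
        exfalso
        rw [hw, hj] at aw
        rw [G'_adj_inl_inl] at aw
        obtain ⟨hqj, hcase⟩ := aw
        by_cases hq : (q:ℕ) % 2 = 1
        · obtain ⟨q₁, hq₁, hq₁o⟩ := himgodd 1 (by omega) (by omega)
          have hqq : (q:ℕ) ≠ q₁ := fun h => by
            have : f (Sum.inr a) = f (V 1) := by rw [hw, hq₁, Fin.ext h]
            have := f.injective this
            simp [hV, Vv] at this
          have hadj : (G' m).Adj (f (Sum.inr a)) (f (V 1)) := by
            rw [hw, hq₁]
            exact G'_adj_inl_inl.mpr ⟨hqq, Or.inr ⟨hq, hq₁o⟩⟩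
          exact hnadj 1 (by omega) (by omega) hadj
        · have key : (q:ℕ)+1 = j₁ ∨ (j₁:ℕ)+1 = q ∨ (q:ℕ)+1 = j₂ ∨ (j₂:ℕ)+1 = q := by
            omega
          have mk : ∀ (s : ℕ), s < n → s ≠ t → ∀ j' : Fin m, f (V s) = Sum.inl j' →
              ((q:ℕ)+1 = j' ∨ (j':ℕ)+1 = q) → False := by
            intro s hs hst j' hjs hadj
            apply hnadj s hs hst
            rw [hw, hjs]
            exact G'_adj_inl_inl.mpr ⟨by omega, Or.inl (by omega)⟩
          rcases key with h | h | h | h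
          · exact mk (t-2) h2n (by omega) j₁ hj₁ (Or.inl h)
          · exact mk (t-2) h2n (by omega) j₁ hj₁ (Or.inr h)
          · exact mk (t+2) h2n' (by omega) j₂ hj₂ (Or.inl h)
          · exact mk (t+2) h2n' (by omega) j₂ hj₂ (Or.inr h)
  -- Step 4: telescoping along the clique.
  have htel : ∀ k : ℕ, 3 + 2*k ≤ n - 4 →
      ∀ j₃ js : Fin m, f (V 3) = Sum.inl j₃ → f (V (3 + 2*k)) = Sum.inl js →
      ((j₃:ℕ) ≤ (js:ℕ) + 2*k ∧ (js:ℕ) ≤ (j₃:ℕ) + 2*k) := by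
    intro k
    induction k with
    | zero =>
        intro _ j₃ js h₁ h₂
        rw [show 3 + 2*0 = 3 by norm_num] at h₂
        rw [h₁] at h₂
        have := Sum.inl_injective h₂
        omega
    | succ k ih =>
        intro hk j₃ js h₁ h₂
        obtain ⟨jk, hjk, _⟩ := himgodd (3+2*k) (by omega) (by omega)
        have ihb := ih (by omega) j₃ jk h₁ hjk
        have s := hstep (3+2*k+1) (by omega) (by omega) (by omega) jk js
          (by rw [show 3+2*k+1-1 = 3+2*k by omega]; exact hjk)
          (by rw [show 3+2*k+1+1 = 3+2*(k+1) by omega]; exact h₂)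
        omega
  -- Conclusion.
  obtain ⟨j₃, hj₃, _⟩ := himgodd 3 (by omega) (by omega)
  obtain ⟨jb, hjb, _⟩ := himgodd (n-4) (by omega) (by omega)
  have hp₃ := hpend 0 3 (by omega) (by omega) (by omega) (Or.inl ⟨rfl, rfl⟩) j₃ hj₃
  have hpb := hpend 1 (n-4) (by omega) (by omega) (by omega) (Or.inr ⟨rfl, rfl⟩) jb hjb
  have hne : (j₃:ℕ) ≠ jb := fun h => by
    have : f (V 3) = f (V (n-4)) := by rw [hj₃, hjb, Fin.ext h]
    have := hfinj _ _ (by omega) (by omega) this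
    omega
  have := htel ((n-7)/2) (by omega) j₃ jb hj₃
    (by rw [show 3 + 2*((n-7)/2) = n-4 by omega]; exact hjb)
  omega
end
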